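/- arXiv:1601.00962 — 8 statements merged into one kernel-verified Lean document; each statement's English description precedes it below -/
import Mathlib

section
/- Let ρ be a two-qubit state, let a1, a2 be unit vectors and b1, b2 linearly independent unit vectors in EuclideanSpace ℝ (Fin 3) with dual basis b1', b2', and set E(m,n) := Re(trace(ρ * ((a_m·σ) ⊗ₖ (b_n·σ)))). Then the full correlations E admit a finite LHV-LHS model with respect to b1, b2 if and only if ‖(E(1,1)+E(2,1))·b1' + (E(1,2)+E(2,2))·b2'‖ + ‖(E(1,1)−E(2,1))·b1' + (E(1,2)−E(2,2))·b2'‖ ≤ 2 (the analog CHSH inequality). -/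
open Matrix Polynomial
open scoped Kronecker Matrix ComplexOrder

noncomputable section

/-- Pauli matrix σ1. -/
def σ₁ : Matrix (Fin 2) (Fin 2) ℂ := !![0, 1; 1, 0]
/-- Pauli matrix σ2. -/
def σ₂ : Matrix (Fin 2) (Fin 2) ℂ := !![0, -Complex.I; Complex.I, 0]
/-- Pauli matrix σ3. -/
def σ₃ : Matrix (Fin 2) (Fin 2) ℂ := !![1, 0; 0, -1]

/-- The three Pauli matrices. -/
def pauli : Fin 3 → Matrix (Fin 2) (Fin 2) ℂ := ![σ₁, σ₂, σ₃]

/-- `v·σ` for a real 3-vector `v`. -/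
def pauliVec (v : EuclideanSpace ℝ (Fin 3)) : Matrix (Fin 2) (Fin 2) ℂ :=
  (v 0 : ℂ) • σ₁ + (v 1 : ℂ) • σ₂ + (v 2 : ℂ) • σ₃

/-- Full correlation `E = Re tr(ρ ((a·σ) ⊗ₖ (b·σ)))`. -/
def corrE (ρ : Matrix (Fin 2 × Fin 2) (Fin 2 × Fin 2) ℂ)
    (a b : EuclideanSpace ℝ (Fin 3)) : ℝ :=
  ((ρ * (pauliVec a ⊗ₖ pauliVec b)).trace).re

/-- Correlation matrix `T i j = Re tr(ρ (σᵢ ⊗ₖ σⱼ))` of a two-qubit state. -/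
def corrMatrix (ρ : Matrix (Fin 2 × Fin 2) (Fin 2 × Fin 2) ℂ) : Matrix (Fin 3) (Fin 3) ℝ :=
  fun i j => ((ρ * (pauli i ⊗ₖ pauli j)).trace).re

/-- The CHSH value `E(1,1) + E(2,1) + E(1,2) − E(2,2)` of `ρ` at `(a1,a2,b1,b2)`. -/
def CHSHval (ρ : Matrix (Fin 2 × Fin 2) (Fin 2 × Fin 2) ℂ)
    (a1 a2 b1 b2 : EuclideanSpace ℝ (Fin 3)) : ℝ :=
  corrE ρ a1 b1 + corrE ρ a2 b1 + corrE ρ a1 b2 - corrE ρ a2 b2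

/-- The real inner product on `EuclideanSpace ℝ (Fin 3)`. -/
def rip (x y : EuclideanSpace ℝ (Fin 3)) : ℝ := inner ℝ x y

/-- Action of a real 3×3 matrix on a Euclidean 3-vector. -/
def matVec (T : Matrix (Fin 3) (Fin 3) ℝ) (v : EuclideanSpace ℝ (Fin 3)) :
    EuclideanSpace ℝ (Fin 3) :=
  (EuclideanSpace.equiv (Fin 3) ℝ).symm (T.mulVec (EuclideanSpace.equiv (Fin 3) ℝ v))

/-- `b1', b2'` is the dual basis of the pair `b1, b2` inside `span{b1, b2}`:
`⟪b'_m, b_n⟫ = δ_{mn}`. -/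
def IsDualPair (b1 b2 b1' b2' : EuclideanSpace ℝ (Fin 3)) : Prop :=
  b1' ∈ Submodule.span ℝ ({b1, b2} : Set (EuclideanSpace ℝ (Fin 3))) ∧
  b2' ∈ Submodule.span ℝ ({b1, b2} : Set (EuclideanSpace ℝ (Fin 3))) ∧
  rip b1' b1 = 1 ∧ rip b1' b2 = 0 ∧ rip b2' b1 = 0 ∧ rip b2' b2 = 1

/-- The analog CHSH value of `ρ` at `(a1,a2,b1,b2)`, with `b1', b2'` the dual basis of
`b1, b2`. -/
def ACHSHval (ρ : Matrix (Fin 2 × Fin 2) (Fin 2 × Fin 2) ℂ)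
    (a1 a2 b1 b2 b1' b2' : EuclideanSpace ℝ (Fin 3)) : ℝ :=
  ‖(corrE ρ a1 b1 + corrE ρ a2 b1) • b1' + (corrE ρ a1 b2 + corrE ρ a2 b2) • b2'‖ +
  ‖(corrE ρ a1 b1 - corrE ρ a2 b1) • b1' + (corrE ρ a1 b2 - corrE ρ a2 b2) • b2'‖

/-- A family `P a m` (outcome `a`, setting `m`) of 2×2 matrices admits a finite
local-hidden-state model. -/
def HasLHSModel (P : Fin 2 → Fin 2 → Matrix (Fin 2) (Fin 2) ℂ) : Prop :=
  ∃ (N : ℕ) (τ : Fin N → Matrix (Fin 2) (Fin 2) ℂ) (q : Fin 2 → Fin 2 → Fin N → ℝ),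
    (∀ lam, (τ lam).PosSemidef) ∧
    (∀ a m lam, 0 ≤ q a m lam ∧ q a m lam ≤ 1) ∧
    (∀ m lam, q 0 m lam + q 1 m lam = 1) ∧
    (∀ a m, P a m = ∑ lam, q a m lam • τ lam)

/-- Full correlations `E m n` admit a finite LHV-LHS model with respect to Bob's
measurement vectors `b 0, b 1`. -/
def HasLHVLHSModel (E : Fin 2 → Fin 2 → ℝ) (b : Fin 2 → EuclideanSpace ℝ (Fin 3)) : Prop :=
  ∃ (N : ℕ) (p : Fin N → ℝ) (e : Fin 2 → Fin N → ℝ)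
    (ρs : Fin N → Matrix (Fin 2) (Fin 2) ℂ),
    (∀ lam, 0 ≤ p lam) ∧ (∑ lam, p lam = 1) ∧
    (∀ m lam, e m lam ∈ Set.Icc (-1 : ℝ) 1) ∧
    (∀ lam, (ρs lam).PosSemidef ∧ (ρs lam).trace = 1) ∧
    (∀ m n, E m n = ∑ lam, p lam * e m lam * ((ρs lam * pauliVec (b n)).trace).re)

/-- Full correlations `E m n` admit a finite LHV model. -/
def HasLHVModel (E : Fin 2 → Fin 2 → ℝ) : Prop :=
  ∃ (N : ℕ) (p : Fin N → ℝ) (e f : Fin 2 → Fin N → ℝ),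
    (∀ lam, 0 ≤ p lam) ∧ (∑ lam, p lam = 1) ∧
    (∀ m lam, e m lam ∈ Set.Icc (-1 : ℝ) 1) ∧
    (∀ n lam, f n lam ∈ Set.Icc (-1 : ℝ) 1) ∧
    (∀ m n, E m n = ∑ lam, p lam * e m lam * f n lam)

/-- The effect `(1/2)(I + (−1)^i v·σ)` of the projective measurement along `v`. -/
def effect (v : EuclideanSpace ℝ (Fin 3)) (i : Fin 2) : Matrix (Fin 2) (Fin 2) ℂ :=
  (1/2 : ℝ) • ((1 : Matrix (Fin 2) (Fin 2) ℂ) + ((-1 : ℝ) ^ (i : ℕ)) • pauliVec v)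

set_option maxHeartbeats 1000000 in
lemma rip_eq (x y : EuclideanSpace ℝ (Fin 3)) : rip x y = x 0 * y 0 + x 1 * y 1 + x 2 * y 2 := by
  simp [rip, PiLp.inner_apply, RCLike.inner_apply, Fin.sum_univ_three]
  ring

/-- The Bloch vector of a 2×2 matrix. -/
def bloch (M : Matrix (Fin 2) (Fin 2) ℂ) : EuclideanSpace ℝ (Fin 3) :=
  WithLp.toLp 2 ![((M * σ₁).trace).re, ((M * σ₂).trace).re, ((M * σ₃).trace).re]

lemma trace_mul_pauliVec_re (M : Matrix (Fin 2) (Fin 2) ℂ) (v : EuclideanSpace ℝ (Fin 3)) :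
    ((M * pauliVec v).trace).re = rip (bloch M) v := by
  simp [pauliVec, Matrix.mul_add, Matrix.mul_smul, rip_eq, bloch, Complex.re_ofReal_mul]
  ring

set_option maxHeartbeats 1000000 in
lemma bloch_norm_sq_le (M : Matrix (Fin 2) (Fin 2) ℂ) (h : M.PosSemidef) (htr : M.trace = 1) :
    (bloch M 0)^2 + (bloch M 1)^2 + (bloch M 2)^2 ≤ 1 := by
  have herm := h.1
  have h10 : M 1 0 = starRingEnd ℂ (M 0 1) := by
    have h := herm.apply 1 0
    simpa using h.symm
  have h00 : (M 0 0).im = 0 := by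
    have := herm.apply 0 0
    have := Complex.conj_eq_iff_im.mp this
    exact this
  have htr' : M 0 0 + M 1 1 = 1 := by
    simpa [Matrix.trace_fin_two] using htr
  have h11 : (M 1 1).im = 0 := by
    have := congrArg Complex.im htr'
    simp [h00] at this; exact this
  have htrre : (M 0 0).re + (M 1 1).re = 1 := by
    have := congrArg Complex.re htr'; simpa using this
  have hdetC : (0:ℂ) ≤ M.det := by
    rw [herm.det_eq_prod_eigenvalues]
    exact Finset.prod_nonneg fun i _ => by
      exact RCLike.ofReal_nonneg.mpr (h.eigenvalues_nonneg i)
  have hdet : 0 ≤ (M.det).re ∧ (M.det).im = 0 := by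
    obtain ⟨h1, h2⟩ := Complex.le_def.mp hdetC
    exact ⟨by simpa using h1, by simpa using h2.symm⟩
  have hdet2 : M.det = M 0 0 * M 1 1 - M 0 1 * M 1 0 := Matrix.det_fin_two M
  have hd : (M 0 1).re^2 + (M 0 1).im^2 ≤ (M 0 0).re * (M 1 1).re := by
    have := hdet.1
    rw [hdet2, h10] at this
    simp [Complex.sub_re, Complex.mul_re, h00, h11, Complex.conj_re, Complex.conj_im] at this
    nlinarith [this]
  have e1 : bloch M 0 = (M 0 1).re + (M 1 0).re := by
    simp [bloch, Matrix.trace_fin_two, Matrix.mul_apply, Fin.sum_univ_two, σ₁]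
  have e2 : bloch M 1 = -(M 0 1).im + (M 1 0).im := by
    simp [bloch, Matrix.trace_fin_two, Matrix.mul_apply, Fin.sum_univ_two, σ₂]
  have e3 : bloch M 2 = (M 0 0).re - (M 1 1).re := by
    simp [bloch, Matrix.trace_fin_two, Matrix.mul_apply, Fin.sum_univ_two, σ₃]
    ring
  rw [e1, e2, e3, h10]
  simp only [Complex.conj_re, Complex.conj_im]
  nlinarith [hd, htrre]

/-- The state with Bloch vector `v`. -/
def mkState (v : EuclideanSpace ℝ (Fin 3)) : Matrix (Fin 2) (Fin 2) ℂ :=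
  (1/2 : ℂ) • (1 + pauliVec v)

lemma mkState_trace (v : EuclideanSpace ℝ (Fin 3)) : (mkState v).trace = 1 := by
  simp [mkState, pauliVec, Matrix.trace_fin_two, σ₁, σ₂, σ₃, Matrix.one_apply]

set_option maxHeartbeats 1000000 in
lemma bloch_mkState (v : EuclideanSpace ℝ (Fin 3)) : bloch (mkState v) = v := by
  ext i
  fin_cases i <;>
    simp [bloch, mkState, pauliVec, Matrix.trace_fin_two, Matrix.mul_apply, Fin.sum_univ_two,
      σ₁, σ₂, σ₃, Matrix.one_apply] <;> ring

set_option maxHeartbeats 1000000 in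
lemma quad_nonneg (v0 v1 v2 p q s t : ℝ) (hv : v0^2+v1^2+v2^2 ≤ 1) :
    0 ≤ (p^2+q^2+s^2+t^2) + v2*(p^2+q^2-s^2-t^2) + 2*v0*(p*s+q*t) + 2*v1*(p*t-q*s) := by
  have hid : (p^2+q^2-s^2-t^2)^2 + (2*(p*s+q*t))^2 + (2*(p*t-q*s))^2 = (p^2+q^2+s^2+t^2)^2 := by
    ring
  have hT : (0:ℝ) ≤ p^2+q^2+s^2+t^2 := by positivity
  have hcs : (v2*(p^2+q^2-s^2-t^2)+v0*(2*(p*s+q*t))+v1*(2*(p*t-q*s)))^2 ≤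
      (v0^2+v1^2+v2^2)*((p^2+q^2-s^2-t^2)^2 + (2*(p*s+q*t))^2 + (2*(p*t-q*s))^2) := by
    nlinarith [sq_nonneg (v2*(2*(p*s+q*t))-v0*(p^2+q^2-s^2-t^2)),
      sq_nonneg (v2*(2*(p*t-q*s))-v1*(p^2+q^2-s^2-t^2)),
      sq_nonneg (v0*(2*(p*t-q*s))-v1*(2*(p*s+q*t)))]
  rw [hid] at hcs
  have h2 : (v2*(p^2+q^2-s^2-t^2)+v0*(2*(p*s+q*t))+v1*(2*(p*t-q*s)))^2 ≤
      (p^2+q^2+s^2+t^2)^2 := by nlinarith [sq_nonneg (p^2+q^2+s^2+t^2)]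
  nlinarith [h2, hT]

set_option maxHeartbeats 1000000 in
lemma mkState_posSemidef (v : EuclideanSpace ℝ (Fin 3))
    (hv : v 0^2 + v 1^2 + v 2^2 ≤ 1) : (mkState v).PosSemidef := by
  rw [Matrix.posSemidef_iff_dotProduct_mulVec]
  constructor
  · apply Matrix.IsHermitian.ext
    intro i j
    fin_cases i <;> fin_cases j <;>
      simp [mkState, pauliVec, σ₁, σ₂, σ₃, Matrix.one_apply, Complex.ext_iff]
  · intro x
    rw [Complex.le_def]
    constructor
    · simp [dotProduct, Matrix.mulVec, Fin.sum_univ_two, mkState, pauliVec,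
        σ₁, σ₂, σ₃, Matrix.one_apply, Complex.add_re, Complex.mul_re, Complex.mul_im,
        Complex.add_im, smul_eq_mul]
      linarith [quad_nonneg (v 0) (v 1) (v 2) (x 0).re (x 0).im (x 1).re (x 1).im hv]
    · simp [dotProduct, Matrix.mulVec, Fin.sum_univ_two, mkState, pauliVec,
        σ₁, σ₂, σ₃, Matrix.one_apply, Complex.add_re, Complex.mul_re, Complex.mul_im,
        Complex.add_im, smul_eq_mul]
      ring

lemma norm_sq_comp (v : EuclideanSpace ℝ (Fin 3)) : v 0^2 + v 1^2 + v 2^2 = ‖v‖^2 := by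
  have h1 : rip v v = v 0 * v 0 + v 1 * v 1 + v 2 * v 2 := rip_eq v v
  have h2 : rip v v = ‖v‖^2 := real_inner_self_eq_norm_sq v
  nlinarith [h1, h2]

set_option maxHeartbeats 1000000 in
lemma proj_le (b1 b2 b1' b2' : EuclideanSpace ℝ (Fin 3)) (hd : IsDualPair b1 b2 b1' b2')
    (v : EuclideanSpace ℝ (Fin 3)) :
    ‖(rip v b1) • b1' + (rip v b2) • b2'‖ ≤ ‖v‖ := by
  obtain ⟨h1, h2, d11, d12, d21, d22⟩ := hd
  rw [Submodule.mem_span_pair] at h1 h2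
  obtain ⟨c1, c2, hc⟩ := h1
  obtain ⟨k1, k2, hk⟩ := h2
  have d11' : (inner ℝ b1' b1 : ℝ) = 1 := d11
  have d12' : (inner ℝ b1' b2 : ℝ) = 0 := d12
  have d21' : (inner ℝ b2' b1 : ℝ) = 0 := d21
  have d22' : (inner ℝ b2' b2 : ℝ) = 1 := d22
  set w : EuclideanSpace ℝ (Fin 3) := (rip v b1) • b1' + (rip v b2) • b2' with hw
  have hv1 : (inner ℝ (v - w) b1 : ℝ) = 0 := by
    simp only [hw, rip, inner_sub_left, inner_add_left, real_inner_smul_left, d11', d21']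
    ring
  have hv2 : (inner ℝ (v - w) b2 : ℝ) = 0 := by
    simp only [hw, rip, inner_sub_left, inner_add_left, real_inner_smul_left, d12', d22']
    ring
  have hb1' : (inner ℝ (v - w) b1' : ℝ) = 0 := by
    rw [← hc]; simp only [inner_add_right, real_inner_smul_right, hv1, hv2]; ring
  have hb2' : (inner ℝ (v - w) b2' : ℝ) = 0 := by
    rw [← hk]; simp only [inner_add_right, real_inner_smul_right, hv1, hv2]; ring
  have hvw : (inner ℝ w (v - w) : ℝ) = 0 := by
    rw [real_inner_comm]
    nth_rewrite 2 [hw]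
    rw [inner_add_right, real_inner_smul_right, real_inner_smul_right, hb1', hb2']
    ring
  have hsq : ‖v‖^2 = ‖w‖^2 + ‖v - w‖^2 := by
    have hv : v = w + (v - w) := by abel
    calc ‖v‖^2 = ‖w + (v - w)‖^2 := by rw [← hv]
      _ = ‖w‖^2 + 2 * (inner ℝ w (v - w) : ℝ) + ‖v - w‖^2 := norm_add_sq_real w (v - w)
      _ = ‖w‖^2 + ‖v - w‖^2 := by rw [hvw]; ring
  nlinarith [norm_nonneg w, norm_nonneg v, norm_nonneg (v - w), sq_nonneg (‖v - w‖)]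

set_option maxHeartbeats 2000000 in
lemma lhvlhs_iff_general (E : Fin 2 → Fin 2 → ℝ) (b1 b2 b1' b2' : EuclideanSpace ℝ (Fin 3))
    (hd : IsDualPair b1 b2 b1' b2') :
    HasLHVLHSModel E ![b1, b2] ↔
      ‖(E 0 0 + E 1 0) • b1' + (E 0 1 + E 1 1) • b2'‖ +
        ‖(E 0 0 - E 1 0) • b1' + (E 0 1 - E 1 1) • b2'‖ ≤ 2 := by
  constructor
  · rintro ⟨N, p, e, ρs, hp, hps, he, hρs, hE⟩
    have hbl : ∀ lam, ‖bloch (ρs lam)‖ ≤ 1 := by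
      intro lam
      have h1 := bloch_norm_sq_le (ρs lam) (hρs lam).1 (hρs lam).2
      rw [norm_sq_comp] at h1
      nlinarith [norm_nonneg (bloch (ρs lam))]
    set w : Fin N → EuclideanSpace ℝ (Fin 3) :=
      fun lam => (rip (bloch (ρs lam)) b1) • b1' + (rip (bloch (ρs lam)) b2) • b2' with hwdef
    have hw : ∀ lam, ‖w lam‖ ≤ 1 :=
      fun lam => (proj_le b1 b2 b1' b2' hd _).trans (hbl lam)
    have hE' : ∀ m n, E m n = ∑ lam, p lam * e m lam * rip (bloch (ρs lam)) (![b1, b2] n) := by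
      intro m n
      rw [hE m n]
      exact Finset.sum_congr rfl fun lam _ => by rw [trace_mul_pauliVec_re]
    have hplus : (E 0 0 + E 1 0) • b1' + (E 0 1 + E 1 1) • b2'
        = ∑ lam, (p lam * (e 0 lam + e 1 lam)) • w lam := by
      rw [hE' 0 0, hE' 1 0, hE' 0 1, hE' 1 1]
      simp only [Matrix.cons_val_zero, Matrix.cons_val_one, Matrix.head_cons]
      rw [← Finset.sum_add_distrib, ← Finset.sum_add_distrib, Finset.sum_smul, Finset.sum_smul,
        ← Finset.sum_add_distrib]
      refine Finset.sum_congr rfl fun lam _ => ?_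
      rw [hwdef]
      simp only [smul_add, smul_smul]
      module
    have hminus : (E 0 0 - E 1 0) • b1' + (E 0 1 - E 1 1) • b2'
        = ∑ lam, (p lam * (e 0 lam - e 1 lam)) • w lam := by
      rw [hE' 0 0, hE' 1 0, hE' 0 1, hE' 1 1]
      simp only [Matrix.cons_val_zero, Matrix.cons_val_one, Matrix.head_cons]
      rw [← Finset.sum_sub_distrib, ← Finset.sum_sub_distrib, Finset.sum_smul, Finset.sum_smul,
        ← Finset.sum_add_distrib]
      refine Finset.sum_congr rfl fun lam _ => ?_
      rw [hwdef]
      simp only [smul_add, smul_smul]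
      module
    have hnorm : ∀ (c : Fin N → ℝ), ‖∑ lam, (c lam) • w lam‖ ≤ ∑ lam, |c lam| := by
      intro c
      calc ‖∑ lam, (c lam) • w lam‖ ≤ ∑ lam, ‖(c lam) • w lam‖ := norm_sum_le _ _
        _ ≤ ∑ lam, |c lam| := by
            refine Finset.sum_le_sum fun lam _ => ?_
            rw [norm_smul, Real.norm_eq_abs]
            calc |c lam| * ‖w lam‖ ≤ |c lam| * 1 :=
              mul_le_mul_of_nonneg_left (hw lam) (abs_nonneg _)
              _ = |c lam| := mul_one _
    have h1 := hnorm (fun lam => p lam * (e 0 lam + e 1 lam))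
    have h2 := hnorm (fun lam => p lam * (e 0 lam - e 1 lam))
    rw [← hplus] at h1
    rw [← hminus] at h2
    have h3 : ∑ lam, (|p lam * (e 0 lam + e 1 lam)| + |p lam * (e 0 lam - e 1 lam)|)
        ≤ ∑ lam, 2 * p lam := by
      refine Finset.sum_le_sum fun lam _ => ?_
      have he0 := he 0 lam
      have he1 := he 1 lam
      rw [Set.mem_Icc] at he0 he1
      rw [abs_mul, abs_mul, abs_of_nonneg (hp lam)]
      rcases abs_cases (e 0 lam + e 1 lam) with ⟨ha, _⟩ | ⟨ha, _⟩ <;>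
        rcases abs_cases (e 0 lam - e 1 lam) with ⟨hb, _⟩ | ⟨hb, _⟩ <;>
        rw [ha, hb] <;> nlinarith [hp lam, he0.1, he0.2, he1.1, he1.2]
    have h4 : ∑ lam, 2 * p lam = 2 := by
      rw [← Finset.mul_sum, hps, mul_one]
    rw [Finset.sum_add_distrib] at h3
    linarith [h1, h2]
  · intro h
    set cp : EuclideanSpace ℝ (Fin 3) := (E 0 0 + E 1 0) • b1' + (E 0 1 + E 1 1) • b2' with hcp
    set cm : EuclideanSpace ℝ (Fin 3) := (E 0 0 - E 1 0) • b1' + (E 0 1 - E 1 1) • b2' with hcm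
    obtain ⟨_, _, d11, d12, d21, d22⟩ := hd
    have hu : ∀ c : EuclideanSpace ℝ (Fin 3), ‖(‖c‖⁻¹ • c)‖ ≤ 1 := by
      intro c
      rcases eq_or_ne c 0 with rfl | hc
      · simp
      · rw [norm_smul, norm_inv, norm_norm, inv_mul_cancel₀ (norm_ne_zero_iff.mpr hc)]
    have hkey : ∀ (c bv : EuclideanSpace ℝ (Fin 3)), ‖c‖/2 * rip (‖c‖⁻¹ • c) bv = rip c bv / 2 := by
      intro c bv
      rcases eq_or_ne c 0 with rfl | hc
      · simp [rip]
      · have : rip ((‖c‖⁻¹ : ℝ) • c) bv = ‖c‖⁻¹ * rip c bv := real_inner_smul_left c bv _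
        rw [this]
        have hn : (‖c‖ : ℝ) ≠ 0 := norm_ne_zero_iff.mpr hc
        field_simp
    have hcpb1 : rip cp b1 = E 0 0 + E 1 0 := by
      rw [hcp]
      show (inner ℝ ((E 0 0 + E 1 0) • b1' + (E 0 1 + E 1 1) • b2') b1 : ℝ) = _
      rw [inner_add_left, real_inner_smul_left, real_inner_smul_left]
      have e1 : (inner ℝ b1' b1 : ℝ) = 1 := d11
      have e2 : (inner ℝ b2' b1 : ℝ) = 0 := d21
      rw [e1, e2]; ring
    have hcpb2 : rip cp b2 = E 0 1 + E 1 1 := by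
      rw [hcp]
      show (inner ℝ ((E 0 0 + E 1 0) • b1' + (E 0 1 + E 1 1) • b2') b2 : ℝ) = _
      rw [inner_add_left, real_inner_smul_left, real_inner_smul_left]
      have e1 : (inner ℝ b1' b2 : ℝ) = 0 := d12
      have e2 : (inner ℝ b2' b2 : ℝ) = 1 := d22
      rw [e1, e2]; ring
    have hcmb1 : rip cm b1 = E 0 0 - E 1 0 := by
      rw [hcm]
      show (inner ℝ ((E 0 0 - E 1 0) • b1' + (E 0 1 - E 1 1) • b2') b1 : ℝ) = _
      rw [inner_add_left, real_inner_smul_left, real_inner_smul_left]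
      have e1 : (inner ℝ b1' b1 : ℝ) = 1 := d11
      have e2 : (inner ℝ b2' b1 : ℝ) = 0 := d21
      rw [e1, e2]; ring
    have hcmb2 : rip cm b2 = E 0 1 - E 1 1 := by
      rw [hcm]
      show (inner ℝ ((E 0 0 - E 1 0) • b1' + (E 0 1 - E 1 1) • b2') b2 : ℝ) = _
      rw [inner_add_left, real_inner_smul_left, real_inner_smul_left]
      have e1 : (inner ℝ b1' b2 : ℝ) = 0 := d12
      have e2 : (inner ℝ b2' b2 : ℝ) = 1 := d22
      rw [e1, e2]; ring
    refine ⟨3, ![‖cp‖/2, ‖cm‖/2, 1 - ‖cp‖/2 - ‖cm‖/2],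
      ![![1, 1, 0], ![1, -1, 0]],
      ![mkState (‖cp‖⁻¹ • cp), mkState (‖cm‖⁻¹ • cm), mkState 0], ?_, ?_, ?_, ?_, ?_⟩
    · intro lam
      fin_cases lam
      · show (0:ℝ) ≤ ‖cp‖/2; positivity
      · show (0:ℝ) ≤ ‖cm‖/2; positivity
      · show (0:ℝ) ≤ 1 - ‖cp‖/2 - ‖cm‖/2; linarith [norm_nonneg cp, norm_nonneg cm]
    · simp [Fin.sum_univ_three]
    · intro m lam
      fin_cases m <;> fin_cases lam <;> norm_num
    · intro lam
      have hsq : ∀ c : EuclideanSpace ℝ (Fin 3),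
          (‖c‖⁻¹ • c) 0 ^ 2 + (‖c‖⁻¹ • c) 1 ^ 2 + (‖c‖⁻¹ • c) 2 ^ 2 ≤ 1 := by
        intro c
        rw [norm_sq_comp]
        nlinarith [hu c, norm_nonneg (‖c‖⁻¹ • c)]
      have h0 : ((0 : EuclideanSpace ℝ (Fin 3)) 0)^2 + ((0 : EuclideanSpace ℝ (Fin 3)) 1)^2
          + ((0 : EuclideanSpace ℝ (Fin 3)) 2)^2 ≤ 1 := by norm_num
      fin_cases lam <;>
        exact ⟨mkState_posSemidef _ (by first | exact hsq _ | exact h0), mkState_trace _⟩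
    · intro m n
      have tr : ∀ (v bv : EuclideanSpace ℝ (Fin 3)),
          ((mkState v * pauliVec bv).trace).re = rip v bv := by
        intro v bv
        rw [trace_mul_pauliVec_re, bloch_mkState]
      have k1 := hkey cp b1
      have k2 := hkey cp b2
      have k3 := hkey cm b1
      have k4 := hkey cm b2
      rw [hcpb1] at k1; rw [hcpb2] at k2; rw [hcmb1] at k3; rw [hcmb2] at k4
      have hz : ∀ bv : EuclideanSpace ℝ (Fin 3), rip (0 : EuclideanSpace ℝ (Fin 3)) bv = 0 := by
        intro bv; simp [rip]
      fin_cases m <;> fin_cases n <;>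
        simp only [Fin.sum_univ_three, Fin.mk_zero, Fin.mk_one, Matrix.cons_val_zero,
          Matrix.cons_val_one, Matrix.head_cons, Matrix.cons_val_two, Matrix.tail_cons, tr, hz,
          Fin.isValue, mul_zero, zero_mul, mul_one, one_mul, add_zero, zero_add, mul_neg,
          neg_mul] <;>
        linarith [k1, k2, k3, k4]

/-- the full correlations of a two-qubit state `ρ` at unit vectors
`a1, a2` and linearly independent unit vectors `b1, b2` (with dual basis `b1', b2'`) admit
a finite LHV-LHS model with respect to `b1, b2` iff the analog CHSH inequality holds. -/
theorem lhvlhs_iff_achsh (ρ : Matrix (Fin 2 × Fin 2) (Fin 2 × Fin 2) ℂ)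
    (hρ : ρ.PosSemidef) (htr : ρ.trace = 1)
    (a1 a2 b1 b2 b1' b2' : EuclideanSpace ℝ (Fin 3))
    (ha1 : ‖a1‖ = 1) (ha2 : ‖a2‖ = 1) (hb1 : ‖b1‖ = 1) (hb2 : ‖b2‖ = 1)
    (hind : LinearIndependent ℝ ![b1, b2]) (hdual : IsDualPair b1 b2 b1' b2') :
    HasLHVLHSModel (fun m n => corrE ρ (![a1, a2] m) (![b1, b2] n)) ![b1, b2] ↔
      ACHSHval ρ a1 a2 b1 b2 b1' b2' ≤ 2 := by
  rw [lhvlhs_iff_general _ b1 b2 b1' b2' hdual]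
  simp only [Matrix.cons_val_zero, Matrix.cons_val_one, Matrix.head_cons]
  rfl

end
end

section
/- Let ρ be a two-qubit state. Then the following are equivalent: (i) there exist unit vectors a1, a2 and linearly independent unit vectors b1, b2 in EuclideanSpace ℝ (Fin 3) such that the full correlations E(m,n) := Re(trace(ρ * ((a_m·σ) ⊗ₖ (b_n·σ)))) admit no finite LHV-LHS model with respect to b1, b2; (ii) there exist unit vectors a1, a2, b1, b2 in EuclideanSpace ℝ (Fin 3) such that the full correlations E(m,n) := Re(trace(ρ * ((a_m·σ) ⊗ₖ (b_n·σ)))) admit no finite LHV model. -/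
open Matrix Polynomial
open scoped Kronecker Matrix ComplexOrder

noncomputable section

open scoped RealInnerProductSpace

lemma aux_trace_re_nonneg {n : Type*} [Fintype n] [DecidableEq n] {ρ Q : Matrix n n ℂ}
    (hρ : ρ.PosSemidef) (hQ : Q.PosSemidef) : 0 ≤ ((ρ * Q).trace).re := by
  obtain ⟨B, hB⟩ : ∃ B : Matrix n n ℂ, Q = Bᴴ * B := by
    open scoped MatrixOrder in
    obtain ⟨B, hB⟩ := CStarAlgebra.nonneg_iff_eq_star_mul_self.mp hQ.nonneg
    exact ⟨B, by rw [hB, Matrix.star_eq_conjTranspose]⟩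
  have h1 : (ρ * Q).trace = (B * ρ * Bᴴ).trace := by
    rw [hB, ← Matrix.mul_assoc, Matrix.trace_mul_cycle]
  have h2 : (B * ρ * Bᴴ).PosSemidef := hρ.mul_mul_conjTranspose_same B
  rw [h1]
  have h3 : ∀ i, 0 ≤ (B * ρ * Bᴴ) i i := fun i => h2.diag_nonneg
  have : 0 ≤ (B * ρ * Bᴴ).trace := Finset.sum_nonneg fun i _ => h3 i
  exact by simpa using (Complex.le_def.mp this).1

lemma aux_abs_trace_le {n : Type*} [Fintype n] [DecidableEq n] {ρ X : Matrix n n ℂ}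
    (hρ : ρ.PosSemidef) (hX : X.IsHermitian) (hX2 : X * X = 1) :
    |((ρ * X).trace).re| ≤ (ρ.trace).re := by
  have key : ∀ ε : ℂ, ε = 1 ∨ ε = -1 → 0 ≤ (ρ.trace).re + (ε * ((ρ * X).trace)).re := by
    intro ε hε
    set P : Matrix n n ℂ := (1/2 : ℂ) • (1 + ε • X) with hP
    have hεs : star ε = ε := by rcases hε with h | h <;> simp [h]
    have hε2 : ε * ε = 1 := by rcases hε with h | h <;> simp [h]
    have hεp : ε ^ 2 = 1 := by rw [sq, hε2]
    have hPH : Pᴴ = P := by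
      simp [hP, Matrix.conjTranspose_smul, Matrix.conjTranspose_add, hX.eq, hεs]
    have hPP : P * P = P := by
      rw [hP]
      have e1 : (1 + ε • X) * (1 + ε • X) = (2:ℂ) • (1 + ε • X) := by
        simp only [Matrix.add_mul, Matrix.mul_add, Matrix.one_mul, Matrix.mul_one,
          Matrix.smul_mul, Matrix.mul_smul, smul_smul, hε2, hεp, hX2, one_smul]
        match_scalars <;> first | ring1 | linear_combination hεp
      rw [Matrix.smul_mul, Matrix.mul_smul, e1, smul_smul, smul_smul]
      norm_num
    have hPpsd : P.PosSemidef := by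
      have := Matrix.posSemidef_conjTranspose_mul_self P
      rwa [hPH, hPP] at this
    have h0 : 0 ≤ ((ρ * P).trace).re := aux_trace_re_nonneg hρ hPpsd
    have ht : (ρ * P).trace = (1/2 : ℂ) * (ρ.trace + ε * (ρ * X).trace) := by
      rw [hP, Matrix.mul_smul, Matrix.trace_smul, Matrix.mul_add, Matrix.mul_one,
        Matrix.trace_add, Matrix.mul_smul, Matrix.trace_smul]
      simp [smul_eq_mul]
    rw [ht] at h0
    simp only [Complex.mul_re, Complex.add_re, Complex.add_im] at h0 ⊢
    norm_num at h0
    linarith [h0]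
  have k1 := key 1 (Or.inl rfl)
  have k2 := key (-1) (Or.inr rfl)
  simp only [one_mul, neg_mul, Complex.neg_re] at k1 k2
  rw [abs_le]; constructor <;> linarith

lemma aux_pauliVec_herm (v : EuclideanSpace ℝ (Fin 3)) : (pauliVec v).IsHermitian := by
  ext i j
  fin_cases i <;> fin_cases j <;>
    simp [pauliVec, σ₁, σ₂, σ₃, Matrix.conjTranspose_apply, Complex.ext_iff]

lemma aux_pauliVec_sq (v : EuclideanSpace ℝ (Fin 3)) :
    pauliVec v * pauliVec v = ((v 0 ^ 2 + v 1 ^ 2 + v 2 ^ 2 : ℝ) : ℂ) • 1 := by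
  ext i j
  fin_cases i <;> fin_cases j <;>
    · simp [pauliVec, σ₁, σ₂, σ₃, Matrix.mul_apply, Fin.sum_univ_succ, Matrix.one_apply,
        Complex.ext_iff, ← Complex.ofReal_pow]
      try constructor <;> ring
      try ring

lemma aux_norm_sq_sum (v : EuclideanSpace ℝ (Fin 3)) (hv : ‖v‖ = 1) :
    v 0 ^ 2 + v 1 ^ 2 + v 2 ^ 2 = 1 := by
  have := congrArg (· ^ 2) hv
  rw [EuclideanSpace.norm_eq] at this
  simp only [Real.norm_eq_abs, sq_abs] at this
  rw [Real.sq_sqrt (by positivity)] at this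
  rw [Fin.sum_univ_three] at this
  linarith

lemma aux_pauliVec_sq_one (v : EuclideanSpace ℝ (Fin 3)) (hv : ‖v‖ = 1) :
    pauliVec v * pauliVec v = 1 := by
  rw [aux_pauliVec_sq, aux_norm_sq_sum v hv]; simp

lemma aux_pauliVec_trace (v : EuclideanSpace ℝ (Fin 3)) : (pauliVec v).trace = 0 := by
  simp [pauliVec, σ₁, σ₂, σ₃, Matrix.trace_fin_two]
  try ring

lemma aux_pauliVec_mul_trace (w b : EuclideanSpace ℝ (Fin 3)) :
    ((pauliVec w * pauliVec b).trace) = ((2 * (w 0 * b 0 + w 1 * b 1 + w 2 * b 2) : ℝ) : ℂ) := by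
  simp [pauliVec, σ₁, σ₂, σ₃, Matrix.trace_fin_two, Matrix.mul_apply, Fin.sum_univ_succ,
    Complex.ext_iff]
  constructor <;> ring

lemma aux_kron_conjTranspose {l m n p : Type*} (A : Matrix l m ℂ) (B : Matrix n p ℂ) :
    (A ⊗ₖ B)ᴴ = Aᴴ ⊗ₖ Bᴴ := by
  ext i j
  simp [Matrix.conjTranspose_apply, Matrix.kroneckerMap_apply]

/-- The qubit state with Bloch vector `w`. -/
def auxBloch (w : EuclideanSpace ℝ (Fin 3)) : Matrix (Fin 2) (Fin 2) ℂ :=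
  (1/2 : ℂ) • (1 + pauliVec w)

lemma auxBloch_trace (w : EuclideanSpace ℝ (Fin 3)) : (auxBloch w).trace = 1 := by
  simp [auxBloch, Matrix.trace_smul, Matrix.trace_add, aux_pauliVec_trace, Matrix.trace_one]

lemma auxBloch_corr (w b : EuclideanSpace ℝ (Fin 3)) :
    ((auxBloch w * pauliVec b).trace).re = ⟪w, b⟫ := by
  rw [auxBloch, Matrix.smul_mul, Matrix.trace_smul, Matrix.add_mul, Matrix.one_mul,
    Matrix.trace_add, aux_pauliVec_trace, aux_pauliVec_mul_trace]
  simp [smul_eq_mul, PiLp.inner_apply, Fin.sum_univ_three, RCLike.inner_apply]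
  try ring

lemma auxBloch_psd_unit (w : EuclideanSpace ℝ (Fin 3)) (hw : ‖w‖ = 1) :
    (auxBloch w).PosSemidef := by
  set P := auxBloch w with hP
  have hPH : Pᴴ = P := by
    simp [hP, auxBloch, Matrix.conjTranspose_smul, Matrix.conjTranspose_add,
      (aux_pauliVec_herm w).eq]
  have hPP : P * P = P := by
    rw [hP, auxBloch]
    have e1 : (1 + pauliVec w) * (1 + pauliVec w) = (2:ℂ) • (1 + pauliVec w) := by
      simp only [Matrix.add_mul, Matrix.mul_add, Matrix.one_mul, Matrix.mul_one,
        aux_pauliVec_sq_one w hw, two_smul]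
      abel
    rw [Matrix.smul_mul, Matrix.mul_smul, e1, smul_smul, smul_smul]
    norm_num
  have := Matrix.posSemidef_conjTranspose_mul_self P
  rwa [hPH, hPP] at this

lemma auxBloch_psd_zero : (auxBloch 0).PosSemidef := by
  have h0 : pauliVec 0 = 0 := by
    have : ∀ i, (0 : EuclideanSpace ℝ (Fin 3)) i = 0 := fun i => rfl
    simp [pauliVec, this]
  have hB : auxBloch 0 = (1/2 : ℂ) • (1 : Matrix (Fin 2) (Fin 2) ℂ) := by
    rw [auxBloch, h0, add_zero]
  rw [hB]
  have h2 : (0:ℂ) ≤ (1/2 : ℂ) := by norm_num [Complex.le_def]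
  exact Matrix.PosSemidef.one.smul h2

lemma aux_pauliVec_smul (r : ℝ) (v : EuclideanSpace ℝ (Fin 3)) :
    pauliVec (r • v) = (r : ℂ) • pauliVec v := by
  have h : ∀ i, (r • v) i = r * v i := fun i => rfl
  simp only [pauliVec, h, Complex.ofReal_mul, smul_add, smul_smul]

lemma aux_pauliVec_add (v w : EuclideanSpace ℝ (Fin 3)) :
    pauliVec (v + w) = pauliVec v + pauliVec w := by
  have h : ∀ i, (v + w) i = v i + w i := fun i => rfl
  simp only [pauliVec, h, Complex.ofReal_add, add_smul]
  abel

lemma aux_corrE_smul (ρ : Matrix (Fin 2 × Fin 2) (Fin 2 × Fin 2) ℂ)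
    (a : EuclideanSpace ℝ (Fin 3)) (r : ℝ) (v : EuclideanSpace ℝ (Fin 3)) :
    corrE ρ a (r • v) = r * corrE ρ a v := by
  rw [corrE, corrE, aux_pauliVec_smul, Matrix.kronecker_smul, Matrix.mul_smul,
    Matrix.trace_smul]
  simp [smul_eq_mul, Complex.mul_re]

lemma aux_corrE_add (ρ : Matrix (Fin 2 × Fin 2) (Fin 2 × Fin 2) ℂ)
    (a : EuclideanSpace ℝ (Fin 3)) (v w : EuclideanSpace ℝ (Fin 3)) :
    corrE ρ a (v + w) = corrE ρ a v + corrE ρ a w := by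
  rw [corrE, corrE, corrE, aux_pauliVec_add, Matrix.kronecker_add, Matrix.mul_add,
    Matrix.trace_add, Complex.add_re]

/-- The vector `u` with `corrE ρ a b = ⟪u, b⟫`. -/
def auxU (ρ : Matrix (Fin 2 × Fin 2) (Fin 2 × Fin 2) ℂ) (a : EuclideanSpace ℝ (Fin 3)) :
    EuclideanSpace ℝ (Fin 3) :=
  ∑ j, EuclideanSpace.single j (corrE ρ a (EuclideanSpace.single j 1))

lemma aux_corrE_inner (ρ : Matrix (Fin 2 × Fin 2) (Fin 2 × Fin 2) ℂ)
    (a b : EuclideanSpace ℝ (Fin 3)) : corrE ρ a b = ⟪auxU ρ a, b⟫ := by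
  have hb : b = b 0 • EuclideanSpace.single 0 (1:ℝ) + b 1 • EuclideanSpace.single 1 (1:ℝ)
      + b 2 • EuclideanSpace.single 2 (1:ℝ) := by
    ext j
    fin_cases j <;> simp [EuclideanSpace.single_apply]
  rw [show corrE ρ a b = corrE ρ a (b 0 • EuclideanSpace.single 0 (1:ℝ)
      + b 1 • EuclideanSpace.single 1 (1:ℝ) + b 2 • EuclideanSpace.single 2 (1:ℝ)) from by
    rw [← hb]]
  rw [aux_corrE_add, aux_corrE_add, aux_corrE_smul, aux_corrE_smul, aux_corrE_smul]
  rw [auxU]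
  rw [Fin.sum_univ_three, inner_add_left, inner_add_left]
  simp only [EuclideanSpace.inner_single_left, starRingEnd_apply, star_trivial]
  rw [hb]
  simp [EuclideanSpace.single_apply]
  ring

lemma aux_corrE_abs_le {ρ : Matrix (Fin 2 × Fin 2) (Fin 2 × Fin 2) ℂ}
    (hρ : ρ.PosSemidef) (htr : ρ.trace = 1) {a b : EuclideanSpace ℝ (Fin 3)}
    (ha : ‖a‖ = 1) (hb : ‖b‖ = 1) : |corrE ρ a b| ≤ 1 := by
  have hX : (pauliVec a ⊗ₖ pauliVec b).IsHermitian := by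
    show _ = _
    rw [aux_kron_conjTranspose, (aux_pauliVec_herm a).eq, (aux_pauliVec_herm b).eq]
  have hX2 : (pauliVec a ⊗ₖ pauliVec b) * (pauliVec a ⊗ₖ pauliVec b) = 1 := by
    rw [← Matrix.mul_kronecker_mul, aux_pauliVec_sq_one a ha, aux_pauliVec_sq_one b hb,
      Matrix.one_kronecker_one]
  have := aux_abs_trace_le hρ hX hX2
  rwa [htr, Complex.one_re] at this

lemma aux_pointwise_chsh {a b c d : ℝ} (ha : a ∈ Set.Icc (-1:ℝ) 1) (hb : b ∈ Set.Icc (-1:ℝ) 1)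
    (hc : c ∈ Set.Icc (-1:ℝ) 1) (hd : d ∈ Set.Icc (-1:ℝ) 1) :
    a * c + b * c + a * d - b * d ≤ 2 := by
  obtain ⟨ha1, ha2⟩ := ha; obtain ⟨hb1, hb2⟩ := hb
  obtain ⟨hc1, hc2⟩ := hc; obtain ⟨hd1, hd2⟩ := hd
  have key : a * c + b * c + a * d - b * d = a * (c + d) + b * (c - d) := by ring
  have h1 : a * (c + d) ≤ |c + d| := by
    calc a * (c + d) ≤ |a * (c + d)| := le_abs_self _
      _ = |a| * |c + d| := abs_mul _ _
      _ ≤ 1 * |c + d| := by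
          have : |a| ≤ 1 := abs_le.2 ⟨ha1, ha2⟩
          exact mul_le_mul_of_nonneg_right this (abs_nonneg _)
      _ = |c + d| := one_mul _
  have h2 : b * (c - d) ≤ |c - d| := by
    calc b * (c - d) ≤ |b * (c - d)| := le_abs_self _
      _ = |b| * |c - d| := abs_mul _ _
      _ ≤ 1 * |c - d| := by
          have : |b| ≤ 1 := abs_le.2 ⟨hb1, hb2⟩
          exact mul_le_mul_of_nonneg_right this (abs_nonneg _)
      _ = |c - d| := one_mul _
  have h3 : |c + d| + |c - d| ≤ 2 := by
    rcases abs_cases (c + d) with ⟨e1, _⟩ | ⟨e1, _⟩ <;>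
      rcases abs_cases (c - d) with ⟨e2, _⟩ | ⟨e2, _⟩ <;> linarith
  linarith [key, h1, h2, h3]

lemma aux_chsh_le {E : Fin 2 → Fin 2 → ℝ} (h : HasLHVModel E) :
    E 0 0 + E 1 0 + E 0 1 - E 1 1 ≤ 2 := by
  obtain ⟨N, p, e, f, hp, hps, he, hf, hE⟩ := h
  rw [hE 0 0, hE 1 0, hE 0 1, hE 1 1]
  rw [← Finset.sum_add_distrib, ← Finset.sum_add_distrib, ← Finset.sum_sub_distrib]
  calc (∑ lam, (p lam * e 0 lam * f 0 lam + p lam * e 1 lam * f 0 lam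
          + p lam * e 0 lam * f 1 lam - p lam * e 1 lam * f 1 lam))
      ≤ ∑ lam, p lam * 2 := by
        refine Finset.sum_le_sum fun lam _ => ?_
        have hpt := aux_pointwise_chsh (he 0 lam) (he 1 lam) (hf 0 lam) (hf 1 lam)
        nlinarith [hp lam]
    _ = 2 := by rw [← Finset.sum_mul, hps, one_mul]

lemma aux_lhs_model (u b : Fin 2 → EuclideanSpace ℝ (Fin 3))
    (E : Fin 2 → Fin 2 → ℝ) (hE : ∀ m n, E m n = ⟪u m, b n⟫)
    (h : ‖u 0 + u 1‖ + ‖u 0 - u 1‖ ≤ 2) : HasLHVLHSModel E b := by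
  classical
  set s := u 0 + u 1 with hs
  set d := u 0 - u 1 with hd
  set sh : EuclideanSpace ℝ (Fin 3) :=
    if s = 0 then EuclideanSpace.single 0 (1:ℝ) else ‖s‖⁻¹ • s with hsh
  set dh : EuclideanSpace ℝ (Fin 3) :=
    if d = 0 then EuclideanSpace.single 0 (1:ℝ) else ‖d‖⁻¹ • d with hdh
  have hshn : ‖sh‖ = 1 := by
    rw [hsh]; split_ifs with h0
    · simp [EuclideanSpace.norm_single]
    · exact norm_smul_inv_norm h0
  have hdhn : ‖dh‖ = 1 := by
    rw [hdh]; split_ifs with h0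
    · simp [EuclideanSpace.norm_single]
    · exact norm_smul_inv_norm h0
  have hs2 : (‖s‖/2) • sh = (1/2 : ℝ) • s := by
    rw [hsh]; split_ifs with h0
    · simp [h0]
    · rw [smul_smul]
      congr 1
      have : ‖s‖ ≠ 0 := norm_ne_zero_iff.2 h0
      field_simp
      try ring
  have hd2 : (‖d‖/2) • dh = (1/2 : ℝ) • d := by
    rw [hdh]; split_ifs with h0
    · simp [h0]
    · rw [smul_smul]
      congr 1
      have : ‖d‖ ≠ 0 := norm_ne_zero_iff.2 h0
      field_simp
      try ring
  refine ⟨3, ![‖s‖/2, ‖d‖/2, 1 - ‖s‖/2 - ‖d‖/2], ![![1,1,0], ![1,-1,0]],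
    ![auxBloch sh, auxBloch dh, auxBloch 0], ?_, ?_, ?_, ?_, ?_⟩
  · intro lam
    fin_cases lam
    · simp only [Fin.zero_eta, Matrix.cons_val_zero]; positivity
    · simp only [Fin.mk_one, Matrix.cons_val_one, Matrix.head_cons]; show (0:ℝ) ≤ ‖d‖/2; positivity
    · show (0:ℝ) ≤ 1 - ‖s‖/2 - ‖d‖/2
      linarith [norm_nonneg s, norm_nonneg d]
  · simp only [Fin.sum_univ_three, Matrix.cons_val_zero, Matrix.cons_val_one, Matrix.head_cons,
      Matrix.cons_val_two, Matrix.tail_cons]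
    ring
  · intro m lam
    fin_cases m <;> fin_cases lam <;> norm_num
  · intro lam
    fin_cases lam <;>
      simp [auxBloch_trace, auxBloch_psd_unit sh hshn, auxBloch_psd_unit dh hdhn,
        auxBloch_psd_zero]
  · intro m n
    rw [hE m n]
    simp only [Fin.sum_univ_three, Matrix.cons_val_zero, Matrix.cons_val_one, Matrix.head_cons,
      Matrix.cons_val_two, Matrix.tail_cons, auxBloch_corr]
    have es : (‖s‖/2) * ⟪sh, b n⟫ = ⟪(1/2:ℝ) • s, b n⟫ := by
      rw [← hs2, real_inner_smul_left]
    have ed : (‖d‖/2) * ⟪dh, b n⟫ = ⟪(1/2:ℝ) • d, b n⟫ := by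
      rw [← hd2, real_inner_smul_left]
    have hz : ⟪(0 : EuclideanSpace ℝ (Fin 3)), b n⟫ = 0 := inner_zero_left _
    fin_cases m
    · have hu : u 0 = (1/2:ℝ) • s + (1/2:ℝ) • d := by rw [hs, hd]; module
      simp only [Fin.zero_eta, Matrix.cons_val_zero, Matrix.cons_val_one, Matrix.head_cons,
        Matrix.cons_val_two, Matrix.tail_cons]
      rw [hu, inner_add_left, hz]
      rw [← es, ← ed]
      ring
    · have hu : u 1 = (1/2:ℝ) • s - (1/2:ℝ) • d := by rw [hs, hd]; module
      simp only [Fin.mk_one, Matrix.cons_val_one, Matrix.head_cons, Matrix.cons_val_zero,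
        Matrix.cons_val_two, Matrix.tail_cons]
      rw [hu, inner_sub_left, hz]
      rw [← es, ← ed]
      ring


lemma aux_lhvlhs_to_lhv {E : Fin 2 → Fin 2 → ℝ} {b : Fin 2 → EuclideanSpace ℝ (Fin 3)}
    (hb : ∀ n, ‖b n‖ = 1) (h : HasLHVLHSModel E b) : HasLHVModel E := by
  obtain ⟨N, p, e, ρs, hp, hps, he, hρs, hE⟩ := h
  refine ⟨N, p, e, fun n lam => ((ρs lam * pauliVec (b n)).trace).re, hp, hps, he, ?_, hE⟩
  intro n lam
  have habs := aux_abs_trace_le (hρs lam).1 (aux_pauliVec_herm (b n))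
    (aux_pauliVec_sq_one (b n) (hb n))
  rw [(hρs lam).2, Complex.one_re] at habs
  exact Set.mem_Icc.2 (abs_le.mp habs)

theorem epr_nonlocal_iff_bell_nonlocal' (ρ : Matrix (Fin 2 × Fin 2) (Fin 2 × Fin 2) ℂ)
    (hρ : ρ.PosSemidef) (htr : ρ.trace = 1) :
    (∃ a1 a2 b1 b2 : EuclideanSpace ℝ (Fin 3),
      ‖a1‖ = 1 ∧ ‖a2‖ = 1 ∧ ‖b1‖ = 1 ∧ ‖b2‖ = 1 ∧
      LinearIndependent ℝ ![b1, b2] ∧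
      ¬ HasLHVLHSModel (fun m n => corrE ρ (![a1, a2] m) (![b1, b2] n)) ![b1, b2]) ↔
    (∃ a1 a2 b1 b2 : EuclideanSpace ℝ (Fin 3),
      ‖a1‖ = 1 ∧ ‖a2‖ = 1 ∧ ‖b1‖ = 1 ∧ ‖b2‖ = 1 ∧
      ¬ HasLHVModel (fun m n => corrE ρ (![a1, a2] m) (![b1, b2] n))) := by
  classical
  constructor
  · rintro ⟨a1, a2, b1, b2, ha1, ha2, hb1, hb2, _hLI, hN⟩
    set u : Fin 2 → EuclideanSpace ℝ (Fin 3) := fun m => auxU ρ (![a1, a2] m) with hu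
    have hcorr : ∀ m (v : EuclideanSpace ℝ (Fin 3)),
        corrE ρ (![a1, a2] m) v = ⟪u m, v⟫ := fun m v => aux_corrE_inner ρ _ v
    set s := u 0 + u 1 with hs
    set d := u 0 - u 1 with hd
    have hbig : 2 < ‖s‖ + ‖d‖ := by
      by_contra hle
      push_neg at hle
      exact hN (aux_lhs_model u ![b1, b2] _ (fun m n => hcorr m _) hle)
    set c1 : EuclideanSpace ℝ (Fin 3) :=
      if s = 0 then EuclideanSpace.single 0 (1:ℝ) else ‖s‖⁻¹ • s with hc1
    set c2 : EuclideanSpace ℝ (Fin 3) :=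
      if d = 0 then EuclideanSpace.single 0 (1:ℝ) else ‖d‖⁻¹ • d with hc2
    have hc1n : ‖c1‖ = 1 := by
      rw [hc1]; split_ifs with h0
      · simp [EuclideanSpace.norm_single]
      · exact norm_smul_inv_norm h0
    have hc2n : ‖c2‖ = 1 := by
      rw [hc2]; split_ifs with h0
      · simp [EuclideanSpace.norm_single]
      · exact norm_smul_inv_norm h0
    have hin1 : ⟪s, c1⟫ = ‖s‖ := by
      rw [hc1]; split_ifs with h0
      · simp [h0]
      · rw [real_inner_smul_right, real_inner_self_eq_norm_mul_norm]
        have : ‖s‖ ≠ 0 := norm_ne_zero_iff.2 h0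
        field_simp
    have hin2 : ⟪d, c2⟫ = ‖d‖ := by
      rw [hc2]; split_ifs with h0
      · simp [h0]
      · rw [real_inner_smul_right, real_inner_self_eq_norm_mul_norm]
        have : ‖d‖ ≠ 0 := norm_ne_zero_iff.2 h0
        field_simp
    refine ⟨a1, a2, c1, c2, ha1, ha2, hc1n, hc2n, fun hLHV => ?_⟩
    have hchsh := aux_chsh_le hLHV
    simp only [Matrix.cons_val_zero, Matrix.cons_val_one, Matrix.head_cons] at hchsh
    rw [show corrE ρ a1 c1 = ⟪u 0, c1⟫ from hcorr 0 c1,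
      show corrE ρ a2 c1 = ⟪u 1, c1⟫ from hcorr 1 c1,
      show corrE ρ a1 c2 = ⟪u 0, c2⟫ from hcorr 0 c2,
      show corrE ρ a2 c2 = ⟪u 1, c2⟫ from hcorr 1 c2] at hchsh
    have h1 : ⟪u 0, c1⟫ + ⟪u 1, c1⟫ = ‖s‖ := by
      rw [← inner_add_left, ← hs, hin1]
    have h2 : ⟪u 0, c2⟫ - ⟪u 1, c2⟫ = ‖d‖ := by
      rw [← inner_sub_left, ← hd, hin2]
    linarith
  · rintro ⟨a1, a2, b1, b2, ha1, ha2, hb1, hb2, hN⟩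
    by_cases hLI : LinearIndependent ℝ ![b1, b2]
    · refine ⟨a1, a2, b1, b2, ha1, ha2, hb1, hb2, hLI, fun hmodel => hN ?_⟩
      refine aux_lhvlhs_to_lhv (fun n => ?_) hmodel
      fin_cases n <;> simpa
    · exfalso
      apply hN
      rw [LinearIndependent.pair_iff] at hLI
      push_neg at hLI
      obtain ⟨sc, t, hst, hne⟩ := hLI
      have hb1z : b1 ≠ 0 := fun h0 => by rw [h0] at hb1; simp at hb1
      have ht : t ≠ 0 := by
        intro h0
        rw [h0, zero_smul, add_zero] at hst
        have hsc : sc = 0 := by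
          rcases smul_eq_zero.mp hst with h | h
          · exact h
          · exact absurd h hb1z
        exact hne hsc h0
      have hts : t • b2 = -(sc • b1) := eq_neg_of_add_eq_zero_right hst
      have hb2e : b2 = (-sc / t) • b1 := by
        calc b2 = t⁻¹ • (t • b2) := (inv_smul_smul₀ ht b2).symm
          _ = t⁻¹ • (-(sc • b1)) := by rw [hts]
          _ = (-sc / t) • b1 := by
              rw [smul_neg, smul_smul, ← neg_smul]
              congr 1
              field_simp
      set c : ℝ := -sc / t with hc
      have hcabs : |c| = 1 := by
        have hnn := congrArg norm hb2e
        rw [norm_smul, hb1, hb2, Real.norm_eq_abs, mul_one] at hnn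
        exact hnn.symm
      have hea : ∀ m : Fin 2, ‖![a1, a2] m‖ = 1 := by
        intro m; fin_cases m <;> simpa
      refine ⟨1, fun _ => 1, fun m _ => corrE ρ (![a1, a2] m) b1,
        fun n _ => ![1, c] n, fun _ => zero_le_one, by simp, ?_, ?_, ?_⟩
      · intro m lam
        exact Set.mem_Icc.2 (abs_le.mp (aux_corrE_abs_le hρ htr (hea m) hb1))
      · intro n lam
        fin_cases n
        · norm_num
        · exact Set.mem_Icc.2 (abs_le.mp (le_of_eq hcabs))
      · intro m n
        fin_cases n
        · simp
        · show corrE ρ (![a1, a2] m) b2 = _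
          rw [hb2e, aux_corrE_smul]
          simp [Fin.sum_univ_one]
          ring

/-- a two-qubit state `ρ` can generate full correlations with no finite
LHV-LHS model (for some unit `a1, a2` and linearly independent unit `b1, b2`) iff it can
generate full correlations with no finite LHV model. -/
theorem epr_nonlocal_iff_bell_nonlocal (ρ : Matrix (Fin 2 × Fin 2) (Fin 2 × Fin 2) ℂ)
    (hρ : ρ.PosSemidef) (htr : ρ.trace = 1) :
    (∃ a1 a2 b1 b2 : EuclideanSpace ℝ (Fin 3),
      ‖a1‖ = 1 ∧ ‖a2‖ = 1 ∧ ‖b1‖ = 1 ∧ ‖b2‖ = 1 ∧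
      LinearIndependent ℝ ![b1, b2] ∧
      ¬ HasLHVLHSModel (fun m n => corrE ρ (![a1, a2] m) (![b1, b2] n)) ![b1, b2]) ↔
    (∃ a1 a2 b1 b2 : EuclideanSpace ℝ (Fin 3),
      ‖a1‖ = 1 ∧ ‖a2‖ = 1 ∧ ‖b1‖ = 1 ∧ ‖b2‖ = 1 ∧
      ¬ HasLHVModel (fun m n => corrE ρ (![a1, a2] m) (![b1, b2] n))) := by
  exact epr_nonlocal_iff_bell_nonlocal' ρ hρ htr

end
end

section
/- For s ∈ [0,1], let M(s) := (1/4)·(I₄ + (1−s)·(σ3 ⊗ₖ I₂) − s·(σ1 ⊗ₖ σ1 − σ2 ⊗ₖ σ2 + σ3 ⊗ₖ σ3)), a 4×4 complex matrix. Then M(s) is Hermitian, its eigenvalues counted with multiplicity are 1/2, s/2, (1−s+√(1−2s+5s²))/4 and (1−s−√(1−2s+5s²))/4, and M(s) has a negative eigenvalue if and only if s > 0. -/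
open Matrix Polynomial
open scoped Kronecker Matrix ComplexOrder

noncomputable section

abbrev ptEquiv4 : Fin 2 × Fin 2 ≃ Fin 4 := finProdFinEquiv.trans (finCongr rfl)

lemma charpoly_aux (a b c d : ℂ) :
    (!![a,0,0,b;0,c,0,0;0,0,d,0;b,0,0,0] : Matrix (Fin 4) (Fin 4) ℂ).charpoly
      = (X - C c) * (X - C d) * (X^2 - C a * X - C (b*b)) := by
  rw [Matrix.charpoly]
  have h : charmatrix (!![a,0,0,b;0,c,0,0;0,0,d,0;b,0,0,0] : Matrix (Fin 4) (Fin 4) ℂ)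
      = !![X - C a, 0, 0, -C b; 0, X - C c, 0, 0; 0, 0, X - C d, 0; -C b, 0, 0, X] := by
    ext i j
    fin_cases i <;> fin_cases j <;>
      simp [charmatrix_apply, Matrix.one_apply, Matrix.vecHead, Matrix.vecTail]
  rw [h]
  simp [Matrix.det_succ_row_zero, Fin.sum_univ_succ, Matrix.vecHead, Matrix.vecTail,
    show (Fin.castSucc 2 : Fin 4) = 2 from rfl, show (Fin.castSucc 1 : Fin 4) = 1 from rfl,
    show (Fin.castSucc 0 : Fin 4) = 0 from rfl, show (Fin.succAbove 3 2 : Fin 4) = 2 from rfl]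
  ring

/-- the partial transpose
`M(s) = (1/4)(I₄ + (1−s) σ3⊗I₂ − s(σ1⊗σ1 − σ2⊗σ2 + σ3⊗σ3))` is Hermitian, has eigenvalues
(with multiplicity) `1/2, s/2, (1−s±√(1−2s+5s²))/4`, and has a negative eigenvalue iff
`s > 0`. -/
theorem partial_transpose_eigenvalues (s : ℝ) (hs0 : 0 ≤ s) (hs1 : s ≤ 1)
    (M : Matrix (Fin 2 × Fin 2) (Fin 2 × Fin 2) ℂ)
    (hM : M = (1/4 : ℝ) • ((1 : Matrix (Fin 2 × Fin 2) (Fin 2 × Fin 2) ℂ)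
      + (1 - s) • (σ₃ ⊗ₖ (1 : Matrix (Fin 2) (Fin 2) ℂ))
      - s • (σ₁ ⊗ₖ σ₁ - σ₂ ⊗ₖ σ₂ + σ₃ ⊗ₖ σ₃))) :
    M.IsHermitian ∧
    M.charpoly = (X - C ((1/2 : ℝ) : ℂ)) * (X - C ((s/2 : ℝ) : ℂ))
      * (X - C (((1 - s + Real.sqrt (1 - 2*s + 5*s^2))/4 : ℝ) : ℂ))
      * (X - C (((1 - s - Real.sqrt (1 - 2*s + 5*s^2))/4 : ℝ) : ℂ)) ∧
    ((∃ μ : ℝ, μ < 0 ∧ M.charpoly.IsRoot (μ : ℂ)) ↔ 0 < s) := by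
  set r : ℝ := Real.sqrt (1 - 2*s + 5*s^2) with hrdef
  have hrnn : 0 ≤ r := Real.sqrt_nonneg _
  have hr2 : r^2 = 1 - 2*s + 5*s^2 := Real.sq_sqrt (by nlinarith)
  have hA : (reindex ptEquiv4 ptEquiv4 M : Matrix (Fin 4) (Fin 4) ℂ)
      = !![(1-(s:ℂ))/2, 0, 0, -(s:ℂ)/2; 0, 1/2, 0, 0; 0, 0, (s:ℂ)/2, 0; -(s:ℂ)/2, 0, 0, 0] := by
    subst hM
    ext i j
    fin_cases i <;> fin_cases j <;>
      simp [show ptEquiv4.symm 0 = ((0,0) : Fin 2 × Fin 2) from rfl,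
        show ptEquiv4.symm 1 = ((0,1) : Fin 2 × Fin 2) from rfl,
        show ptEquiv4.symm 2 = ((1,0) : Fin 2 × Fin 2) from rfl,
        show ptEquiv4.symm 3 = ((1,1) : Fin 2 × Fin 2) from rfl,
          show finProdFinEquiv.symm (0 : Fin 4) = ((0,0) : Fin 2 × Fin 2) from rfl,
          show finProdFinEquiv.symm (1 : Fin 4) = ((0,1) : Fin 2 × Fin 2) from rfl,
          show finProdFinEquiv.symm (2 : Fin 4) = ((1,0) : Fin 2 × Fin 2) from rfl,
          show finProdFinEquiv.symm (3 : Fin 4) = ((1,1) : Fin 2 × Fin 2) from rfl,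
        σ₁, σ₂, σ₃, Matrix.one_apply, Matrix.kroneckerMap_apply, Matrix.vecHead,
        Matrix.vecTail, Prod.ext_iff] <;> ring
  have hcp : M.charpoly = (X - C ((1/2 : ℝ) : ℂ)) * (X - C ((s/2 : ℝ) : ℂ))
      * (X - C (((1 - s + r)/4 : ℝ) : ℂ)) * (X - C (((1 - s - r)/4 : ℝ) : ℂ)) := by
    have h1 : M.charpoly = (reindex ptEquiv4 ptEquiv4 M).charpoly :=
      (Matrix.charpoly_reindex _ _).symm
    rw [h1, hA, charpoly_aux]
    have hrC : ((r:ℂ))^2 = 1 - 2*(s:ℂ) + 5*(s:ℂ)^2 := by exact_mod_cast hr2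
    have hsum : C (((1 - s + r)/4 : ℝ) : ℂ) + C (((1 - s - r)/4 : ℝ) : ℂ)
        = C ((1-(s:ℂ))/2) := by
      rw [← map_add]; congr 1; push_cast; ring
    have hprod : C (((1 - s + r)/4 : ℝ) : ℂ) * C (((1 - s - r)/4 : ℝ) : ℂ)
        = -C ((-(s:ℂ)/2)*(-(s:ℂ)/2)) := by
      rw [← _root_.map_mul, ← map_neg]; congr 1; push_cast
      linear_combination (-(1:ℂ)/16) * hrC
    have e1 : (((1/2 : ℝ)) : ℂ) = (1/2 : ℂ) := by norm_num
    have e2 : ((s/2 : ℝ) : ℂ) = (s:ℂ)/2 := by push_cast; ring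
    rw [e1, e2]
    linear_combination (X - C ((1:ℂ)/2)) * (X - C ((s:ℂ)/2)) * X * hsum
      - (X - C ((1:ℂ)/2)) * (X - C ((s:ℂ)/2)) * hprod
  refine ⟨?_, ?_, ?_⟩
  · have hMeq : M = (reindex ptEquiv4 ptEquiv4 M).submatrix ptEquiv4 ptEquiv4 := by
      ext i j
      simp [Matrix.reindex_apply, Matrix.submatrix_apply]
    rw [hMeq, hA]
    have hH : (!![(1-(s:ℂ))/2, 0, 0, -(s:ℂ)/2; 0, 1/2, 0, 0; 0, 0, (s:ℂ)/2, 0;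
        -(s:ℂ)/2, 0, 0, 0] : Matrix (Fin 4) (Fin 4) ℂ).IsHermitian := by
      rw [Matrix.IsHermitian]
      ext i j
      fin_cases i <;> fin_cases j <;>
        simp [Matrix.conjTranspose_apply, Matrix.vecHead, Matrix.vecTail]
    exact hH.submatrix _
  · exact hcp
  · constructor
    · rintro ⟨μ, hμ, hroot⟩
      rw [hcp] at hroot
      simp only [IsRoot, eval_mul, eval_sub, eval_X, eval_C, mul_eq_zero, sub_eq_zero] at hroot
      rcases hroot with ((h | h) | h) | h <;>
        · have hμ' := Complex.ofReal_inj.mp h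
          nlinarith [hr2, hrnn, sq_nonneg s, sq_nonneg (r - (1 - s)), sq_nonneg (r + (1 - s))]
    · intro hs
      refine ⟨(1 - s - r)/4, ?_, ?_⟩
      · nlinarith
      · rw [hcp]
        simp [IsRoot]

end
end

section
/- For s ∈ ((√5−1)/2, 1], the family of 2×2 complex matrices ρ(0,1) = (1/4)·(I − s·σ1), ρ(1,1) = (1/4)·(I + s·σ1), ρ(0,2) = (1/4)·((2−s)·I − s·σ3), ρ(1,2) = (1/4)·(s·I + s·σ3) admits no finite LHS model. -/
open Matrix Polynomial
open scoped Kronecker Matrix ComplexOrder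

noncomputable section

/-- Auxiliary: facts from positive semidefiniteness of a 2×2 complex matrix. -/
lemma steer_psd_facts (τ : Matrix (Fin 2) (Fin 2) ℂ) (h : τ.PosSemidef) :
    0 ≤ (τ 0 0).re ∧ 0 ≤ (τ 1 1).re ∧ (τ 0 1).re ^ 2 ≤ (τ 0 0).re * (τ 1 1).re := by
  have herm : (τ 1 0).re = (τ 0 1).re := by
    rw [← h.1.apply 0 1]; simp
  have hA : 0 ≤ (τ 0 0).re := by
    have := h.dotProduct_mulVec_nonneg ![1, 0]
    rw [Complex.le_def] at this
    simpa [dotProduct, Matrix.mulVec, Fin.sum_univ_two] using this.1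
  have hD : 0 ≤ (τ 1 1).re := by
    have := h.dotProduct_mulVec_nonneg ![0, 1]
    rw [Complex.le_def] at this
    simpa [dotProduct, Matrix.mulVec, Fin.sum_univ_two] using this.1
  refine ⟨hA, hD, ?_⟩
  have hq : ∀ t : ℝ, 0 ≤ (τ 0 0).re * (t * t) + (2 * (τ 0 1).re) * t + (τ 1 1).re := by
    intro t
    have := h.dotProduct_mulVec_nonneg ![(t : ℂ), 1]
    rw [Complex.le_def] at this
    have h1 := this.1
    simp [dotProduct, Matrix.mulVec, Fin.sum_univ_two, Complex.add_re, Complex.mul_re] at h1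
    have h2 : (τ 0 0).re * (t * t) + 2 * (τ 0 1).re * t + (τ 1 1).re =
        t * ((τ 0 0).re * t + (τ 0 1).re) + ((τ 1 0).re * t + (τ 1 1).re) := by
      rw [herm]; ring
    rw [h2]; exact h1
  have := discrim_le_zero hq
  rw [discrim] at this
  nlinarith [this]

/-- Auxiliary: the core arithmetic inequality behind the steering argument. -/
lemma steer_core {N : ℕ} {s : ℝ} (hs0 : 0 ≤ s) (A D X α β : Fin N → ℝ)
    (hA : ∀ l, 0 ≤ A l) (hD : ∀ l, 0 ≤ D l) (hX : ∀ l, X l ^ 2 ≤ A l * D l)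
    (hα : ∀ l, |α l| ≤ 1) (hβ : ∀ l, |β l| ≤ 1)
    (e1 : ∑ l, α l * X l = s / 2)
    (e2 : ∑ l, β l * D l = -(1 / 2))
    (e3 : ∑ l, β l * A l = s - 1 / 2)
    (e4 : ∑ l, D l = 1 / 2)
    (e5 : ∑ l, A l = 1 / 2) :
    s ^ 2 ≤ 1 - s := by
  classical
  have hterm : ∀ l : Fin N, 0 ≤ (1 + β l) * D l := fun l =>
    mul_nonneg (by linarith [(abs_le.1 (hβ l)).1]) (hD l)
  have hsum0 : ∑ l, (1 + β l) * D l = 0 := by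
    simp only [add_mul, one_mul]
    rw [Finset.sum_add_distrib, e2, e4]; ring
  have hzero : ∀ l : Fin N, (1 + β l) * D l = 0 := by
    intro l
    exact (Finset.sum_eq_zero_iff_of_nonneg (fun i _ => hterm i)).1 hsum0 l (Finset.mem_univ l)
  set T := Finset.univ.filter (fun l : Fin N => D l ≠ 0) with hT
  have hβT : ∀ l ∈ T, β l = -1 := by
    intro l hl
    have hDl : D l ≠ 0 := (Finset.mem_filter.1 hl).2
    have := hzero l
    rcases mul_eq_zero.1 this with h | h
    · linarith [h]
    · exact absurd h hDl
  have hXc : ∀ l ∈ (Finset.univ \ T), X l = 0 := by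
    intro l hl
    have hD0 : D l = 0 := by
      have := Finset.mem_sdiff.1 hl
      by_contra hne
      exact this.2 (Finset.mem_filter.2 ⟨Finset.mem_univ l, hne⟩)
    have h1 := hX l
    rw [hD0, mul_zero] at h1
    have h2 : X l ^ 2 = 0 := le_antisymm h1 (sq_nonneg _)
    exact pow_eq_zero_iff (by norm_num) |>.1 h2
  have hsplitA : ∑ l, β l * A l = ∑ l ∈ T, β l * A l + ∑ l ∈ Finset.univ \ T, β l * A l := by
    rw [← Finset.sum_sdiff (Finset.subset_univ T)]; ring
  have hTA : ∑ l ∈ T, β l * A l = -∑ l ∈ T, A l := by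
    rw [← Finset.sum_neg_distrib]
    exact Finset.sum_congr rfl fun l hl => by rw [hβT l hl]; ring
  have hcA : ∑ l ∈ Finset.univ \ T, β l * A l ≤ ∑ l ∈ Finset.univ \ T, A l := by
    apply Finset.sum_le_sum
    intro l _
    have := (abs_le.1 (hβ l)).2
    nlinarith [hA l]
  have hAsplit : ∑ l ∈ T, A l + ∑ l ∈ Finset.univ \ T, A l = 1 / 2 := by
    rw [← e5, ← Finset.sum_sdiff (Finset.subset_univ T)]; ring
  have hV : ∑ l ∈ T, A l ≤ (1 - s) / 2 := by
    have h := hsplitA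
    rw [e3, hTA] at h
    linarith [hcA, hAsplit]
  have hXsplit : ∑ l, α l * X l = ∑ l ∈ T, α l * X l := by
    rw [← Finset.sum_sdiff (Finset.subset_univ T)]
    have h : ∑ l ∈ Finset.univ \ T, α l * X l = 0 :=
      Finset.sum_eq_zero fun l hl => by rw [hXc l hl, mul_zero]
    rw [h]; ring
  have hstep : ∀ l ∈ T, α l * X l ≤ Real.sqrt (A l * D l) := by
    intro l _
    have h1 : α l * X l ≤ |X l| := by
      calc α l * X l ≤ |α l * X l| := le_abs_self _
        _ = |α l| * |X l| := abs_mul _ _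
        _ ≤ 1 * |X l| := mul_le_mul_of_nonneg_right (hα l) (abs_nonneg _)
        _ = |X l| := one_mul _
    have h2 : |X l| ≤ Real.sqrt (A l * D l) := by
      rw [← Real.sqrt_sq_eq_abs]
      exact Real.sqrt_le_sqrt (hX l)
    linarith
  have hs2 : s / 2 ≤ ∑ l ∈ T, Real.sqrt (A l * D l) := by
    rw [← e1, hXsplit]
    exact Finset.sum_le_sum hstep
  have hCS : (∑ l ∈ T, Real.sqrt (A l * D l)) ^ 2 ≤ (∑ l ∈ T, A l) * ∑ l ∈ T, D l := by
    apply Finset.sum_sq_le_sum_mul_sum_of_sq_eq_mul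
    · exact fun l _ => hA l
    · exact fun l _ => hD l
    · exact fun l _ => Real.sq_sqrt (mul_nonneg (hA l) (hD l))
  have hTD : ∑ l ∈ T, D l ≤ 1 / 2 := by
    rw [← e4]
    exact Finset.sum_le_sum_of_subset_of_nonneg (Finset.subset_univ T) (fun l _ _ => hD l)
  have hTDnn : (0:ℝ) ≤ ∑ l ∈ T, D l := Finset.sum_nonneg fun l _ => hD l
  have hTAnn : (0:ℝ) ≤ ∑ l ∈ T, A l := Finset.sum_nonneg fun l _ => hA l
  nlinarith [hs2, hCS, hV, hTD, hTDnn, hTAnn,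
    Finset.sum_nonneg (fun l (_ : l ∈ T) => Real.sqrt_nonneg (A l * D l))]

/-- for `s ∈ ((√5−1)/2, 1]`, the assemblage
`ρ(0,1) = (1/4)(I − s σ1)`, `ρ(1,1) = (1/4)(I + s σ1)`,
`ρ(0,2) = (1/4)((2−s) I − s σ3)`, `ρ(1,2) = (1/4)(s I + s σ3)`
admits no finite LHS model. -/
theorem assemblage_steerable (s : ℝ) (hs : (Real.sqrt 5 - 1)/2 < s) (hs1 : s ≤ 1)
    (P : Fin 2 → Fin 2 → Matrix (Fin 2) (Fin 2) ℂ)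
    (h00 : P 0 0 = (1/4 : ℝ) • ((1 : Matrix (Fin 2) (Fin 2) ℂ) - s • σ₁))
    (h10 : P 1 0 = (1/4 : ℝ) • ((1 : Matrix (Fin 2) (Fin 2) ℂ) + s • σ₁))
    (h01 : P 0 1 = (1/4 : ℝ) • ((2 - s) • (1 : Matrix (Fin 2) (Fin 2) ℂ) - s • σ₃))
    (h11 : P 1 1 = (1/4 : ℝ) • (s • (1 : Matrix (Fin 2) (Fin 2) ℂ) + s • σ₃)) :
    ¬ HasLHSModel P := by
  rintro ⟨N, τ, q, hPSD, hq01, hqsum, hP⟩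
  classical
  have hfacts := fun l => steer_psd_facts (τ l) (hPSD l)
  have hent : ∀ (a m i j : Fin 2), (P a m i j).re = ∑ l, q a m l * (τ l i j).re := by
    intro a m i j
    rw [hP a m, Matrix.sum_apply, Complex.re_sum]
    exact Finset.sum_congr rfl fun l _ => by simp [Matrix.smul_apply, Complex.real_smul]
  have e1a : ∑ l, q 0 0 l * (τ l 0 1).re = -(s/4) := by
    rw [← hent 0 0 0 1, h00]
    simp [σ₁, Matrix.smul_apply, Matrix.sub_apply, Matrix.one_apply]
    ring
  have e1b : ∑ l, q 1 0 l * (τ l 0 1).re = s/4 := by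
    rw [← hent 1 0 0 1, h10]
    simp [σ₁, Matrix.smul_apply, Matrix.add_apply, Matrix.one_apply]
    ring
  have eD0 : ∑ l, q 0 1 l * (τ l 1 1).re = 1/2 := by
    rw [← hent 0 1 1 1, h01]
    simp [σ₃, Matrix.smul_apply, Matrix.sub_apply, Matrix.one_apply]
    ring
  have eD1 : ∑ l, q 1 1 l * (τ l 1 1).re = 0 := by
    rw [← hent 1 1 1 1, h11]
    simp [σ₃, Matrix.smul_apply, Matrix.add_apply, Matrix.one_apply]
  have eA0 : ∑ l, q 0 1 l * (τ l 0 0).re = (1-s)/2 := by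
    rw [← hent 0 1 0 0, h01]
    simp [σ₃, Matrix.smul_apply, Matrix.sub_apply, Matrix.one_apply]
    ring
  have eA1 : ∑ l, q 1 1 l * (τ l 0 0).re = s/2 := by
    rw [← hent 1 1 0 0, h11]
    simp [σ₃, Matrix.smul_apply, Matrix.add_apply, Matrix.one_apply]
    ring
  have e1 : ∑ l, (q 1 0 l - q 0 0 l) * (τ l 0 1).re = s / 2 := by
    simp only [sub_mul]
    rw [Finset.sum_sub_distrib, e1b, e1a]; ring
  have e2 : ∑ l, (q 1 1 l - q 0 1 l) * (τ l 1 1).re = -(1/2) := by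
    simp only [sub_mul]
    rw [Finset.sum_sub_distrib, eD1, eD0]; ring
  have e3 : ∑ l, (q 1 1 l - q 0 1 l) * (τ l 0 0).re = s - 1/2 := by
    simp only [sub_mul]
    rw [Finset.sum_sub_distrib, eA1, eA0]; ring
  have e4 : ∑ l, (τ l 1 1).re = 1/2 := by
    have h : ∀ l : Fin N, (τ l 1 1).re
        = q 0 1 l * (τ l 1 1).re + q 1 1 l * (τ l 1 1).re := fun l => by
      rw [← add_mul, hqsum 1 l, one_mul]
    rw [Finset.sum_congr rfl fun l _ => h l, Finset.sum_add_distrib, eD0, eD1]; ring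
  have e5 : ∑ l, (τ l 0 0).re = 1/2 := by
    have h : ∀ l : Fin N, (τ l 0 0).re
        = q 0 1 l * (τ l 0 0).re + q 1 1 l * (τ l 0 0).re := fun l => by
      rw [← add_mul, hqsum 1 l, one_mul]
    rw [Finset.sum_congr rfl fun l _ => h l, Finset.sum_add_distrib, eA0, eA1]; ring
  have hα : ∀ l : Fin N, |q 1 0 l - q 0 0 l| ≤ 1 := fun l =>
    abs_le.2 ⟨by linarith [(hq01 1 0 l).1, (hq01 0 0 l).2], by linarith [(hq01 1 0 l).2, (hq01 0 0 l).1]⟩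
  have hβ : ∀ l : Fin N, |q 1 1 l - q 0 1 l| ≤ 1 := fun l =>
    abs_le.2 ⟨by linarith [(hq01 1 1 l).1, (hq01 0 1 l).2], by linarith [(hq01 1 1 l).2, (hq01 0 1 l).1]⟩
  have hs0 : 0 ≤ s := by
    have h5 : Real.sqrt 5 ^ 2 = 5 := Real.sq_sqrt (by norm_num)
    nlinarith [hs, Real.sqrt_nonneg 5, h5]
  have hcore : s ^ 2 ≤ 1 - s :=
    steer_core hs0 (fun l => (τ l 0 0).re) (fun l => (τ l 1 1).re) (fun l => (τ l 0 1).re)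
      (fun l => q 1 0 l - q 0 0 l) (fun l => q 1 1 l - q 0 1 l)
      (fun l => (hfacts l).1) (fun l => (hfacts l).2.1) (fun l => (hfacts l).2.2)
      hα hβ e1 e2 e3 e4 e5
  have h5 : Real.sqrt 5 ^ 2 = 5 := Real.sq_sqrt (by norm_num)
  nlinarith [hcore, hs, Real.sqrt_nonneg 5, h5, sq_nonneg (s - (Real.sqrt 5 - 1)/2)]

end
end

section
/- For s ∈ ((√5−1)/2, √2/2], let ρ(s) := (1/4)·(I₄ + (1−s)·(σ3 ⊗ₖ I₂) − s·(σ1 ⊗ₖ σ1 + σ2 ⊗ₖ σ2 + σ3 ⊗ₖ σ3)). Then: (a) for every quadruple of unit vectors a1, a2, b1, b2 in EuclideanSpace ℝ (Fin 3), the CHSH value of ρ(s) at (a1,a2,b1,b2) is at most 2; and (b) the family ρ(0,1) = (1/4)·(I − s·σ1), ρ(1,1) = (1/4)·(I + s·σ1), ρ(0,2) = (1/4)·((2−s)·I − s·σ3), ρ(1,2) = (1/4)·(s·I + s·σ3) admits no finite LHS model. Hence ρ(s) is steerable by two projective measurements per party but cannot generate Bell-nonlocal correlations in the simplest scenario. 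-/
open Matrix Polynomial
open scoped Kronecker Matrix ComplexOrder

noncomputable section

-- Auxiliary lemmas --------------------------------------------------------

private lemma aux_gold_lemma (s : ℝ) (hs : (Real.sqrt 5 - 1)/2 < s) (hs0 : 0 < s)
    (hfinal : (s/2)^2 ≤ (1-s)/2 * (1/2)) : False := by
  nlinarith [Real.sq_sqrt (by norm_num : (0:ℝ) ≤ 5), Real.sqrt_nonneg 5]

private lemma aux_s_le_one (s : ℝ) (hs1 : s ≤ Real.sqrt 2 / 2) : s ≤ 1 := by
  nlinarith [Real.sq_sqrt (by norm_num : (0:ℝ) ≤ 2), Real.sqrt_nonneg 2]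

private lemma aux_s_pos (s : ℝ) (hs : (Real.sqrt 5 - 1)/2 < s) : 0 < s := by
  nlinarith [Real.sq_sqrt (by norm_num : (0:ℝ) ≤ 5), Real.sqrt_nonneg 5]

private lemma aux_psd_facts (M : Matrix (Fin 2) (Fin 2) ℂ) (h : M.PosSemidef) :
    0 ≤ (M 0 0).re ∧ 0 ≤ (M 1 1).re ∧ (M 0 1).re^2 ≤ (M 0 0).re * (M 1 1).re := by
  have herm : (M 1 0).re = (M 0 1).re := by
    have := congrFun (congrFun h.1 1) 0
    simp [Matrix.conjTranspose_apply] at this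
    rw [← this]
    simp
  have quad : ∀ t : ℝ, 0 ≤ (M 0 0).re * (t*t) + 2 * (M 0 1).re * t + (M 1 1).re := by
    intro t
    have h2 := h.dotProduct_mulVec_nonneg ![(t:ℂ), 1]
    have h3 := (Complex.le_def.mp h2).1
    simp [dotProduct, Matrix.mulVec, Fin.sum_univ_two, Complex.add_re,
      Complex.mul_re] at h3
    have heq : (M 0 0).re * (t*t) + 2 * (M 0 1).re * t + (M 1 1).re
        = t * ((M 0 0).re * t + (M 0 1).re) + ((M 1 0).re * t + (M 1 1).re) := by
      rw [herm]; ring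
    rw [heq]; exact h3
  have h00 : 0 ≤ (M 0 0).re := by
    have h2 := h.dotProduct_mulVec_nonneg ![1, 0]
    have h3 := (Complex.le_def.mp h2).1
    simpa [dotProduct, Matrix.mulVec, Fin.sum_univ_two] using h3
  have h11 : 0 ≤ (M 1 1).re := by
    have h2 := h.dotProduct_mulVec_nonneg ![0, 1]
    have h3 := (Complex.le_def.mp h2).1
    simpa [dotProduct, Matrix.mulVec, Fin.sum_univ_two] using h3
  refine ⟨h00, h11, ?_⟩
  have := discrim_le_zero quad
  simp [discrim] at this
  nlinarith [this]

private lemma aux_corrE (s : ℝ) (a b : EuclideanSpace ℝ (Fin 3)) :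
    corrE ((1/4 : ℝ) • ((1 : Matrix (Fin 2 × Fin 2) (Fin 2 × Fin 2) ℂ)
      + (1 - s) • (σ₃ ⊗ₖ (1 : Matrix (Fin 2) (Fin 2) ℂ))
      - s • (σ₁ ⊗ₖ σ₁ + σ₂ ⊗ₖ σ₂ + σ₃ ⊗ₖ σ₃))) a b
    = -s * (a 0 * b 0 + a 1 * b 1 + a 2 * b 2) := by
  have h : (((1/4 : ℝ) • ((1 : Matrix (Fin 2 × Fin 2) (Fin 2 × Fin 2) ℂ)
      + (1 - s) • (σ₃ ⊗ₖ (1 : Matrix (Fin 2) (Fin 2) ℂ))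
      - s • (σ₁ ⊗ₖ σ₁ + σ₂ ⊗ₖ σ₂ + σ₃ ⊗ₖ σ₃)) * (pauliVec a ⊗ₖ pauliVec b)).trace)
      = ((-s * (a 0 * b 0 + a 1 * b 1 + a 2 * b 2) : ℝ) : ℂ) := by
    simp [Matrix.trace, Matrix.mul_apply, Fintype.sum_prod_type, Fin.sum_univ_two,
      pauliVec, σ₁, σ₂, σ₃, Matrix.one_apply, Complex.I_sq]
    push_cast
    ring_nf
    simp [Complex.I_sq]
    ring
  simp only [corrE]
  rw [h, Complex.ofReal_re]

private lemma aux_chsh (s : ℝ) (hs0 : 0 ≤ s) (hs1 : s ≤ Real.sqrt 2 / 2)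
    (a1 a2 b1 b2 : EuclideanSpace ℝ (Fin 3))
    (ha1 : ‖a1‖ = 1) (ha2 : ‖a2‖ = 1) (hb1 : ‖b1‖ = 1) (hb2 : ‖b2‖ = 1) :
    -s * (inner ℝ a1 b1 : ℝ) + -s * (inner ℝ a2 b1 : ℝ) + -s * (inner ℝ a1 b2 : ℝ)
      - -s * (inner ℝ a2 b2 : ℝ) ≤ 2 := by
  have key : -s * (inner ℝ a1 b1 : ℝ) + -s * (inner ℝ a2 b1 : ℝ) + -s * (inner ℝ a1 b2 : ℝ)
      - -s * (inner ℝ a2 b2 : ℝ)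
      = -s * ((inner ℝ a1 (b1 + b2) : ℝ) + (inner ℝ a2 (b1 - b2) : ℝ)) := by
    rw [inner_add_right, inner_sub_right]; ring
  rw [key]
  set u := ‖b1 + b2‖
  set v := ‖b1 - b2‖
  have hu : 0 ≤ u := norm_nonneg _
  have hv : 0 ≤ v := norm_nonneg _
  have huv : u^2 + v^2 = 4 := by
    have h1 := norm_add_sq_real b1 b2
    have h2 := norm_sub_sq_real b1 b2
    have h3 : u^2 + v^2 = 2*‖b1‖^2 + 2*‖b2‖^2 := by rw [h1, h2]; ring
    rw [h3, hb1, hb2]; norm_num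
  have hX : |(inner ℝ a1 (b1 + b2) : ℝ) + (inner ℝ a2 (b1 - b2) : ℝ)| ≤ u + v := by
    calc |(inner ℝ a1 (b1 + b2) : ℝ) + (inner ℝ a2 (b1 - b2) : ℝ)|
        ≤ |(inner ℝ a1 (b1 + b2) : ℝ)| + |(inner ℝ a2 (b1 - b2) : ℝ)| := abs_add_le _ _
      _ ≤ ‖a1‖*u + ‖a2‖*v := add_le_add (abs_real_inner_le_norm _ _)
          (abs_real_inner_le_norm _ _)
      _ = u + v := by rw [ha1, ha2]; ring
  have hs2 : s^2 ≤ 1/2 := by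
    nlinarith [Real.sq_sqrt (by norm_num : (0:ℝ) ≤ 2), Real.sqrt_nonneg 2]
  have huv2 : (u + v)^2 ≤ 8 := by nlinarith [sq_nonneg (u - v)]
  have h2 : s * (u + v) ≤ 2 := by nlinarith [sq_nonneg (s*(u+v))]
  calc -s * ((inner ℝ a1 (b1 + b2) : ℝ) + (inner ℝ a2 (b1 - b2) : ℝ))
      ≤ s * |(inner ℝ a1 (b1 + b2) : ℝ) + (inner ℝ a2 (b1 - b2) : ℝ)| := by
        rw [neg_mul]
        have := neg_abs_le ((inner ℝ a1 (b1 + b2) : ℝ) + (inner ℝ a2 (b1 - b2) : ℝ))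
        nlinarith [abs_nonneg ((inner ℝ a1 (b1 + b2) : ℝ) + (inner ℝ a2 (b1 - b2) : ℝ))]
    _ ≤ s * (u + v) := by nlinarith
    _ ≤ 2 := h2

/-- for `s ∈ ((√5−1)/2, √2/2]`, the state
`ρ(s) = (1/4)(I₄ + (1−s) σ3⊗I₂ − s(σ1⊗σ1 + σ2⊗σ2 + σ3⊗σ3))` has CHSH value at most 2 for
all unit measurement vectors, yet its assemblage under Alice's measurements along
`(1,0,0)` and `(0,0,1)` admits no finite LHS model. -/
theorem hierarchy_steering_bell (s : ℝ)
    (hs : (Real.sqrt 5 - 1)/2 < s) (hs1 : s ≤ Real.sqrt 2 / 2)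
    (ρ : Matrix (Fin 2 × Fin 2) (Fin 2 × Fin 2) ℂ)
    (hρ : ρ = (1/4 : ℝ) • ((1 : Matrix (Fin 2 × Fin 2) (Fin 2 × Fin 2) ℂ)
      + (1 - s) • (σ₃ ⊗ₖ (1 : Matrix (Fin 2) (Fin 2) ℂ))
      - s • (σ₁ ⊗ₖ σ₁ + σ₂ ⊗ₖ σ₂ + σ₃ ⊗ₖ σ₃)))
    (P : Fin 2 → Fin 2 → Matrix (Fin 2) (Fin 2) ℂ)
    (h00 : P 0 0 = (1/4 : ℝ) • ((1 : Matrix (Fin 2) (Fin 2) ℂ) - s • σ₁))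
    (h10 : P 1 0 = (1/4 : ℝ) • ((1 : Matrix (Fin 2) (Fin 2) ℂ) + s • σ₁))
    (h01 : P 0 1 = (1/4 : ℝ) • ((2 - s) • (1 : Matrix (Fin 2) (Fin 2) ℂ) - s • σ₃))
    (h11 : P 1 1 = (1/4 : ℝ) • (s • (1 : Matrix (Fin 2) (Fin 2) ℂ) + s • σ₃)) :
    (∀ a1 a2 b1 b2 : EuclideanSpace ℝ (Fin 3),
      ‖a1‖ = 1 → ‖a2‖ = 1 → ‖b1‖ = 1 → ‖b2‖ = 1 →
      CHSHval ρ a1 a2 b1 b2 ≤ 2) ∧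
    ¬ HasLHSModel P := by
  have hs0 : 0 < s := aux_s_pos s hs
  constructor
  · -- Part (a): CHSH bound
    intro a1 a2 b1 b2 ha1 ha2 hb1 hb2
    have hinner : ∀ a b : EuclideanSpace ℝ (Fin 3),
        a 0 * b 0 + a 1 * b 1 + a 2 * b 2 = (inner ℝ a b : ℝ) := by
      intro a b
      simp [PiLp.inner_apply, RCLike.inner_apply, Fin.sum_univ_three, mul_comm]
    have hE : ∀ a b : EuclideanSpace ℝ (Fin 3), corrE ρ a b = -s * (inner ℝ a b : ℝ) := by
      intro a b
      rw [hρ, aux_corrE, hinner]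
    simp only [CHSHval, hE]
    exact aux_chsh s hs0.le hs1 a1 a2 b1 b2 ha1 ha2 hb1 hb2
  · -- Part (b): no LHS model
    rintro ⟨N, τ, q, hτ, hq, hqsum, hP⟩
    set x : Fin N → ℝ := fun lam => (τ lam 0 0).re with hx
    set y : Fin N → ℝ := fun lam => (τ lam 1 1).re with hy
    set z : Fin N → ℝ := fun lam => (τ lam 0 1).re with hz
    have hx0 : ∀ lam, 0 ≤ x lam := fun lam => (aux_psd_facts _ (hτ lam)).1
    have hy0 : ∀ lam, 0 ≤ y lam := fun lam => (aux_psd_facts _ (hτ lam)).2.1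
    have hzxy : ∀ lam, (z lam)^2 ≤ x lam * y lam := fun lam => (aux_psd_facts _ (hτ lam)).2.2
    have key : ∀ (a m : Fin 2) (i j : Fin 2),
        ((P a m) i j).re = ∑ lam, q a m lam * (τ lam i j).re := by
      intro a m i j
      rw [hP a m]
      rw [Matrix.sum_apply]
      rw [Complex.re_sum]
      congr 1 with lam
      simp [Complex.smul_re]
    have e2 : ∑ lam, q 1 1 lam * y lam = 0 := by
      have h := key 1 1 1 1
      rw [h11] at h
      simpa [σ₃, Matrix.one_apply] using h.symm
    have e3 : ∑ lam, q 1 1 lam * x lam = s/2 := by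
      have h := key 1 1 0 0
      rw [h11] at h
      simp [σ₃, Matrix.one_apply] at h
      rw [← h]; ring
    have e4a : ∑ lam, q 1 0 lam * z lam = s/4 := by
      have h := key 1 0 0 1
      rw [h10] at h
      simp [σ₁, Matrix.one_apply] at h
      rw [← h]; ring
    have e4b : ∑ lam, q 0 0 lam * z lam = -(s/4) := by
      have h := key 0 0 0 1
      rw [h00] at h
      simp [σ₁, Matrix.one_apply] at h
      rw [← h]; ring
    have e1x : ∑ lam, x lam = 1/2 := by
      have va : ((P 0 0) 0 0).re = 1/4 := by rw [h00]; simp [σ₁, Matrix.one_apply]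
      have vb : ((P 1 0) 0 0).re = 1/4 := by rw [h10]; simp [σ₁, Matrix.one_apply]
      have ha := key 0 0 0 0
      have hb := key 1 0 0 0
      rw [va] at ha; rw [vb] at hb
      have h : (1/4 : ℝ) + 1/4 = ∑ lam, (q 0 0 lam + q 1 0 lam) * x lam := by
        rw [show (fun lam => (q 0 0 lam + q 1 0 lam) * x lam)
          = fun lam => q 0 0 lam * x lam + q 1 0 lam * x lam from funext fun lam => by ring,
          Finset.sum_add_distrib, ← ha, ← hb]
      rw [show (fun lam => (q 0 0 lam + q 1 0 lam) * x lam) = fun lam => x lam from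
        funext fun lam => by rw [hqsum 0 lam]; ring] at h
      linarith [h]
    have e1y : ∑ lam, y lam = 1/2 := by
      have va : ((P 0 0) 1 1).re = 1/4 := by rw [h00]; simp [σ₁, Matrix.one_apply]
      have vb : ((P 1 0) 1 1).re = 1/4 := by rw [h10]; simp [σ₁, Matrix.one_apply]
      have ha := key 0 0 1 1
      have hb := key 1 0 1 1
      rw [va] at ha; rw [vb] at hb
      have h : (1/4 : ℝ) + 1/4 = ∑ lam, (q 0 0 lam + q 1 0 lam) * y lam := by
        rw [show (fun lam => (q 0 0 lam + q 1 0 lam) * y lam)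
          = fun lam => q 0 0 lam * y lam + q 1 0 lam * y lam from funext fun lam => by ring,
          Finset.sum_add_distrib, ← ha, ← hb]
      rw [show (fun lam => (q 0 0 lam + q 1 0 lam) * y lam) = fun lam => y lam from
        funext fun lam => by rw [hqsum 0 lam]; ring] at h
      linarith [h]
    have hz00 : ∀ lam, q 1 1 lam * y lam = 0 := by
      intro lam
      have h := (Finset.sum_eq_zero_iff_of_nonneg
        (fun i _ => mul_nonneg (hq 1 1 i).1 (hy0 i))).mp e2
      exact h lam (Finset.mem_univ lam)
    set T : Finset (Fin N) := Finset.univ.filter (fun lam => y lam ≠ 0) with hT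
    have hzS : ∀ lam, y lam = 0 → z lam = 0 := by
      intro lam h0
      have h := hzxy lam
      rw [h0, mul_zero] at h
      nlinarith [sq_nonneg (z lam)]
    have hq11T : ∀ lam ∈ T, q 1 1 lam = 0 := by
      intro lam hlam
      rw [hT, Finset.mem_filter] at hlam
      rcases mul_eq_zero.mp (hz00 lam) with h | h
      · exact h
      · exact absurd h hlam.2
    have step1 : s/2 ≤ ∑ lam ∈ T, Real.sqrt (x lam) * Real.sqrt (y lam) := by
      have hdiff : ∑ lam, (q 1 0 lam - q 0 0 lam) * z lam = s/2 := by
        rw [show (fun lam => (q 1 0 lam - q 0 0 lam) * z lam)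
          = fun lam => q 1 0 lam * z lam - q 0 0 lam * z lam from funext fun lam => by ring,
          Finset.sum_sub_distrib, e4a, e4b]; ring
      calc s/2 = ∑ lam, (q 1 0 lam - q 0 0 lam) * z lam := hdiff.symm
        _ = ∑ lam ∈ T, (q 1 0 lam - q 0 0 lam) * z lam := by
            rw [← Finset.sum_filter_add_sum_filter_not Finset.univ (fun lam => y lam ≠ 0)]
            have h : ∑ lam ∈ Finset.univ.filter (fun lam => ¬ y lam ≠ 0),
                (q 1 0 lam - q 0 0 lam) * z lam = 0 := by
              apply Finset.sum_eq_zero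
              intro lam hlam
              rw [Finset.mem_filter] at hlam
              rw [hzS lam (not_not.mp hlam.2), mul_zero]
            rw [h, add_zero]
        _ ≤ ∑ lam ∈ T, Real.sqrt (x lam) * Real.sqrt (y lam) := by
            apply Finset.sum_le_sum
            intro lam _
            have habs : |z lam| ≤ Real.sqrt (x lam) * Real.sqrt (y lam) := by
              rw [← Real.sqrt_mul (hx0 lam), ← Real.sqrt_sq_eq_abs]
              exact Real.sqrt_le_sqrt (hzxy lam)
            have hle1 : |q 1 0 lam - q 0 0 lam| ≤ 1 := by
              rw [abs_le]
              constructor <;> nlinarith [(hq 1 0 lam).1, (hq 1 0 lam).2,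
                (hq 0 0 lam).1, (hq 0 0 lam).2]
            calc (q 1 0 lam - q 0 0 lam) * z lam
                ≤ |(q 1 0 lam - q 0 0 lam) * z lam| := le_abs_self _
              _ = |q 1 0 lam - q 0 0 lam| * |z lam| := abs_mul _ _
              _ ≤ 1 * (Real.sqrt (x lam) * Real.sqrt (y lam)) :=
                  mul_le_mul hle1 habs (abs_nonneg _) zero_le_one
              _ = _ := one_mul _
    have cs : (∑ lam ∈ T, Real.sqrt (x lam) * Real.sqrt (y lam))^2
        ≤ (∑ lam ∈ T, x lam) * (∑ lam ∈ T, y lam) := by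
      have h := Finset.sum_mul_sq_le_sq_mul_sq T
        (fun lam => Real.sqrt (x lam)) (fun lam => Real.sqrt (y lam))
      simpa [Real.sq_sqrt (hx0 _), Real.sq_sqrt (hy0 _)] using h
    have hTy : ∑ lam ∈ T, y lam ≤ 1/2 := by
      rw [← e1y]
      exact Finset.sum_le_sum_of_subset_of_nonneg (Finset.subset_univ T) (fun i _ _ => hy0 i)
    have hTx : ∑ lam ∈ T, x lam ≤ (1 - s)/2 := by
      have hSx : s/2 ≤ ∑ lam ∈ Finset.univ.filter (fun lam => ¬ y lam ≠ 0), x lam := by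
        rw [← e3]
        rw [← Finset.sum_filter_add_sum_filter_not Finset.univ (fun lam => y lam ≠ 0)
          (fun lam => q 1 1 lam * x lam)]
        have hT0 : ∑ lam ∈ T, q 1 1 lam * x lam = 0 :=
          Finset.sum_eq_zero fun lam hlam => by rw [hq11T lam hlam, zero_mul]
        rw [hT0, zero_add]
        apply Finset.sum_le_sum
        intro lam _
        nlinarith [(hq 1 1 lam).1, (hq 1 1 lam).2, hx0 lam]
      have hsplit : (∑ lam ∈ T, x lam)
          + ∑ lam ∈ Finset.univ.filter (fun lam => ¬ y lam ≠ 0), x lam = 1/2 := by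
        rw [← e1x, ← Finset.sum_filter_add_sum_filter_not Finset.univ (fun lam => y lam ≠ 0)]
      linarith
    have hsum_nonneg : 0 ≤ ∑ lam ∈ T, Real.sqrt (x lam) * Real.sqrt (y lam) :=
      Finset.sum_nonneg fun lam _ => mul_nonneg (Real.sqrt_nonneg _) (Real.sqrt_nonneg _)
    have hTx0 : 0 ≤ ∑ lam ∈ T, x lam := Finset.sum_nonneg fun i _ => hx0 i
    have hTy0 : 0 ≤ ∑ lam ∈ T, y lam := Finset.sum_nonneg fun i _ => hy0 i
    have hs_le1 : s ≤ 1 := aux_s_le_one s hs1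
    have final : (s/2)^2 ≤ (1-s)/2 * (1/2) := by
      calc (s/2)^2 ≤ (∑ lam ∈ T, Real.sqrt (x lam) * Real.sqrt (y lam))^2 :=
          pow_le_pow_left₀ (by linarith) step1 2
        _ ≤ (∑ lam ∈ T, x lam) * (∑ lam ∈ T, y lam) := cs
        _ ≤ (1-s)/2 * (1/2) := mul_le_mul hTx hTy hTy0 (by linarith)
    exact aux_gold_lemma s hs hs0 final


end
end

section
/- For p ∈ (1/√2, 1] and θ ∈ ℝ with sin(2θ) ≠ 0, the family of 2×2 complex matrices ρ(0,1) = (1/4)·(I + cos(2θ)·σ3 + p·sin(2θ)·σ1), ρ(1,1) = (1/4)·(I + cos(2θ)·σ3 − p·sin(2θ)·σ1), ρ(0,2) = (1/4)·((1 + p·cos(2θ))·I + (cos(2θ) + p)·σ3), ρ(1,2) = (1/4)·((1 − p·cos(2θ))·I + (cos(2θ) − p)·σ3) admits no finite LHS model. -/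
open Matrix Polynomial
open scoped Kronecker Matrix ComplexOrder

noncomputable section

lemma cs_bound (n u v x z t : ℝ) (ht : 0 ≤ t) (hxz : x^2 + z^2 ≤ t^2)
    (hn : n^2 = u^2 + v^2) (hnn : 0 ≤ n) : 0 ≤ n*t - u*x - v*z := by
  nlinarith [sq_nonneg (u*z - v*x), mul_nonneg hnn ht, sq_nonneg (n*t + u*x + v*z),
    sq_nonneg (n*t - u*x - v*z)]

lemma psd_entries {M : Matrix (Fin 2) (Fin 2) ℂ} (h : M.PosSemidef) :
    0 ≤ (M 0 0).re ∧ 0 ≤ (M 1 1).re ∧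
      (2*(M 0 1).re)^2 + ((M 0 0).re - (M 1 1).re)^2 ≤ ((M 0 0).re + (M 1 1).re)^2 := by
  have h10 : (M 1 0).re = (M 0 1).re := by
    have := h.1
    have h2 : (Mᴴ) 0 1 = M 0 1 := by rw [this]
    simp [Matrix.conjTranspose_apply] at h2
    rw [← h2]
    simp [Complex.conj_re]
  have quad : ∀ u w : ℝ, 0 ≤ (M 0 0).re * (u*u) + (2*(M 0 1).re) * (u*w) + (M 1 1).re * (w*w) := by
    intro u w
    have hx := (posSemidef_iff_dotProduct_mulVec.mp h).2 ![(u:ℂ), (w:ℂ)]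
    rw [Complex.le_def] at hx
    have := hx.1
    simp [dotProduct, Matrix.mulVec, Fin.sum_univ_two, Complex.add_re, Complex.mul_re] at this
    rw [h10] at this
    ring_nf at this ⊢
    linarith
  have hA : 0 ≤ (M 0 0).re := by have := quad 1 0; nlinarith
  have hC : 0 ≤ (M 1 1).re := by have := quad 0 1; nlinarith
  have hd : discrim (M 0 0).re (2*(M 0 1).re) (M 1 1).re ≤ 0 := by
    apply discrim_le_zero
    intro u
    have := quad u 1
    nlinarith
  rw [discrim] at hd
  refine ⟨hA, hC, by nlinarith⟩

/-- for `p ∈ (1/√2, 1]` and `sin 2θ ≠ 0`, the assemblage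
`ρ(0,1) = (1/4)(I + cos 2θ σ3 + p sin 2θ σ1)`, `ρ(1,1) = (1/4)(I + cos 2θ σ3 − p sin 2θ σ1)`,
`ρ(0,2) = (1/4)((1 + p cos 2θ) I + (cos 2θ + p) σ3)`,
`ρ(1,2) = (1/4)((1 − p cos 2θ) I + (cos 2θ − p) σ3)` admits no finite LHS model. -/
theorem one_way_steerable (p θ : ℝ) (hp : 1 / Real.sqrt 2 < p) (hp1 : p ≤ 1)
    (hθ : Real.sin (2*θ) ≠ 0)
    (P : Fin 2 → Fin 2 → Matrix (Fin 2) (Fin 2) ℂ)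
    (h00 : P 0 0 = (1/4 : ℝ) • ((1 : Matrix (Fin 2) (Fin 2) ℂ)
      + Real.cos (2*θ) • σ₃ + (p * Real.sin (2*θ)) • σ₁))
    (h10 : P 1 0 = (1/4 : ℝ) • ((1 : Matrix (Fin 2) (Fin 2) ℂ)
      + Real.cos (2*θ) • σ₃ - (p * Real.sin (2*θ)) • σ₁))
    (h01 : P 0 1 = (1/4 : ℝ) • ((1 + p * Real.cos (2*θ)) • (1 : Matrix (Fin 2) (Fin 2) ℂ)
      + (Real.cos (2*θ) + p) • σ₃))
    (h11 : P 1 1 = (1/4 : ℝ) • ((1 - p * Real.cos (2*θ)) • (1 : Matrix (Fin 2) (Fin 2) ℂ)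
      + (Real.cos (2*θ) - p) • σ₃)) :
    ¬ HasLHSModel P := by
  intro hM
  obtain ⟨N, τ, q, hτpsd, hqbnd, hqsum, hPeq⟩ := hM
  set s : ℝ := Real.sin (2*θ) with hs
  set k : ℝ := Real.cos (2*θ) with hk
  have hsk : s^2 + k^2 = 1 := Real.sin_sq_add_cos_sq (2*θ)
  have hs2 : 0 < s^2 := by
    have : s ≠ 0 := hθ
    positivity
  have hp0 : 0 < p := lt_trans (by positivity) hp
  have h2p : 1/2 < p^2 := by
    have h1 : (1 / Real.sqrt 2)^2 = 1/2 := by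
      rw [div_pow, one_pow, Real.sq_sqrt] <;> norm_num
    have h2 := pow_lt_pow_left₀ hp (by positivity : (0:ℝ) ≤ 1 / Real.sqrt 2) (by norm_num : 2 ≠ 0)
    rw [h1] at h2
    exact h2
  have hk1 : k^2 ≤ 1 := by nlinarith
  -- entrywise real sums
  have hsum : ∀ (a m : Fin 2) (i j : Fin 2),
      ∑ l, q a m l * (τ l i j).re = (P a m i j).re := by
    intro a m i j
    rw [hPeq a m, Matrix.sum_apply, Complex.re_sum]
    apply Finset.sum_congr rfl
    intro l _
    simp [Matrix.smul_apply, Complex.smul_re, smul_eq_mul]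
  set A : Fin N → ℝ := fun l => (τ l 0 0).re with hA
  set C : Fin N → ℝ := fun l => (τ l 1 1).re with hC
  set X : Fin N → ℝ := fun l => 2*(τ l 0 1).re with hX
  have hpsd : ∀ l, 0 ≤ A l ∧ 0 ≤ C l ∧ X l^2 + (A l - C l)^2 ≤ (A l + C l)^2 := by
    intro l
    exact psd_entries (hτpsd l)
  -- the six elementary sums
  have S1A : ∑ l, q 0 1 l * A l = (1 + p*k + (k+p))/4 := by
    have h := hsum 0 1 0 0
    rw [h01] at h
    rw [h]
    simp [σ₁, σ₃, Matrix.smul_apply, Matrix.add_apply, Matrix.sub_apply, Matrix.one_apply,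
      Complex.smul_re, Complex.add_re, Complex.sub_re, Complex.one_re]
    ring
  have S1C : ∑ l, q 0 1 l * C l = (1 + p*k - (k+p))/4 := by
    have h := hsum 0 1 1 1
    rw [h01] at h
    rw [h]
    simp [σ₁, σ₃, Matrix.smul_apply, Matrix.add_apply, Matrix.sub_apply, Matrix.one_apply,
      Complex.smul_re, Complex.add_re, Complex.sub_re, Complex.one_re]
    ring
  have S2A : ∑ l, q 1 1 l * A l = (1 - p*k + (k-p))/4 := by
    have h := hsum 1 1 0 0
    rw [h11] at h
    rw [h]
    simp [σ₁, σ₃, Matrix.smul_apply, Matrix.add_apply, Matrix.sub_apply, Matrix.one_apply,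
      Complex.smul_re, Complex.add_re, Complex.sub_re, Complex.one_re]
    ring
  have S2C : ∑ l, q 1 1 l * C l = (1 - p*k - (k-p))/4 := by
    have h := hsum 1 1 1 1
    rw [h11] at h
    rw [h]
    simp [σ₁, σ₃, Matrix.smul_apply, Matrix.add_apply, Matrix.sub_apply, Matrix.one_apply,
      Complex.smul_re, Complex.add_re, Complex.sub_re, Complex.one_re]
    ring
  have S3 : ∑ l, q 0 0 l * X l = p*s/2 := by
    have h := hsum 0 0 0 1
    rw [h00] at h
    have h2 : ∑ l, q 0 0 l * X l = 2 * ∑ l, q 0 0 l * (τ l 0 1).re := by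
      rw [Finset.mul_sum]
      apply Finset.sum_congr rfl
      intro l _
      rw [hX]
      ring
    rw [h2, h]
    simp [σ₁, σ₃, Matrix.smul_apply, Matrix.add_apply, Matrix.sub_apply, Matrix.one_apply,
      Complex.smul_re, Complex.add_re, Complex.sub_re, Complex.one_re]
    ring
  have S4 : ∑ l, q 1 0 l * X l = -(p*s)/2 := by
    have h := hsum 1 0 0 1
    rw [h10] at h
    have h2 : ∑ l, q 1 0 l * X l = 2 * ∑ l, q 1 0 l * (τ l 0 1).re := by
      rw [Finset.mul_sum]
      apply Finset.sum_congr rfl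
      intro l _
      rw [hX]
      ring
    rw [h2, h]
    simp [σ₁, σ₃, Matrix.smul_apply, Matrix.add_apply, Matrix.sub_apply, Matrix.one_apply,
      Complex.smul_re, Complex.add_re, Complex.sub_re, Complex.one_re]
    ring
  -- dual certificate
  set σp : ℝ := p * s with hσp
  set n1 : ℝ := Real.sqrt (σp^2 + (k+p)^2) with hn1def
  set n2 : ℝ := Real.sqrt (σp^2 + (k-p)^2) with hn2def
  have hn1sq : n1^2 = σp^2 + (k+p)^2 := Real.sq_sqrt (by positivity)
  have hn2sq : n2^2 = σp^2 + (k-p)^2 := Real.sq_sqrt (by positivity)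
  have hn1nn : 0 ≤ n1 := Real.sqrt_nonneg _
  have hn2nn : 0 ≤ n2 := Real.sqrt_nonneg _
  -- per-λ Cauchy–Schwarz bounds
  have hB1 : ∀ l, 0 ≤ n1*(A l + C l) - σp*(X l) - (k+p)*(A l - C l) := by
    intro l
    obtain ⟨ha, hc, hxz⟩ := hpsd l
    have := cs_bound n1 (σp) (k+p) (X l) (A l - C l) (A l + C l) (by linarith) hxz (by linear_combination hn1sq) hn1nn
    linarith
  have hB3 : ∀ l, 0 ≤ n1*(A l + C l) + σp*(X l) - (k+p)*(A l - C l) := by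
    intro l
    obtain ⟨ha, hc, hxz⟩ := hpsd l
    have := cs_bound n1 (-σp) (k+p) (X l) (A l - C l) (A l + C l) (by linarith) hxz (by linear_combination hn1sq) hn1nn
    linarith
  have hB2 : ∀ l, 0 ≤ n2*(A l + C l) - σp*(X l) + (p-k)*(A l - C l) := by
    intro l
    obtain ⟨ha, hc, hxz⟩ := hpsd l
    have := cs_bound n2 (σp) (k-p) (X l) (A l - C l) (A l + C l) (by linarith) hxz (by linear_combination hn2sq) hn2nn
    linarith
  have hB4 : ∀ l, 0 ≤ n2*(A l + C l) + σp*(X l) + (p-k)*(A l - C l) := by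
    intro l
    obtain ⟨ha, hc, hxz⟩ := hpsd l
    have := cs_bound n2 (-σp) (k-p) (X l) (A l - C l) (A l + C l) (by linarith) hxz (by linear_combination hn2sq) hn2nn
    linarith
  -- per-λ nonnegativity of the dual functional
  have hL : ∀ l, 0 ≤ n1*(q 0 1 l * A l) + n1*(q 0 1 l * C l) + n2*(q 1 1 l * A l)
      + n2*(q 1 1 l * C l) - σp*(q 0 0 l * X l) + σp*(q 1 0 l * X l)
      - (k+p)*(q 0 1 l * A l) + (k+p)*(q 0 1 l * C l)
      + (p-k)*(q 1 1 l * A l) - (p-k)*(q 1 1 l * C l) := by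
    intro l
    have hq1 := hqsum 0 l
    have hq2 := hqsum 1 l
    obtain ⟨h00a, h00b⟩ := hqbnd 0 0 l
    obtain ⟨h10a, h10b⟩ := hqbnd 1 0 l
    obtain ⟨h01a, h01b⟩ := hqbnd 0 1 l
    obtain ⟨h11a, h11b⟩ := hqbnd 1 1 l
    have hid : n1*(q 0 1 l * A l) + n1*(q 0 1 l * C l) + n2*(q 1 1 l * A l)
      + n2*(q 1 1 l * C l) - σp*(q 0 0 l * X l) + σp*(q 1 0 l * X l)
      - (k+p)*(q 0 1 l * A l) + (k+p)*(q 0 1 l * C l)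
      + (p-k)*(q 1 1 l * A l) - (p-k)*(q 1 1 l * C l)
      = q 0 0 l * q 0 1 l * (n1*(A l + C l) - σp*(X l) - (k+p)*(A l - C l))
      + q 0 0 l * q 1 1 l * (n2*(A l + C l) - σp*(X l) + (p-k)*(A l - C l))
      + q 1 0 l * q 0 1 l * (n1*(A l + C l) + σp*(X l) - (k+p)*(A l - C l))
      + q 1 0 l * q 1 1 l * (n2*(A l + C l) + σp*(X l) + (p-k)*(A l - C l)) := by
      linear_combination (-(n1*(q 0 1 l)*(A l + C l) + n2*(q 1 1 l)*(A l + C l)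
        - (k+p)*(q 0 1 l)*(A l - C l) + (p-k)*(q 1 1 l)*(A l - C l))) * hq1
        + (σp * X l * (q 0 0 l - q 1 0 l)) * hq2
    rw [hid]
    have t1 := mul_nonneg (mul_nonneg h00a h01a) (hB1 l)
    have t2 := mul_nonneg (mul_nonneg h00a h11a) (hB2 l)
    have t3 := mul_nonneg (mul_nonneg h10a h01a) (hB3 l)
    have t4 := mul_nonneg (mul_nonneg h10a h11a) (hB4 l)
    linarith
  -- sum it up
  have hS : (0:ℝ) ≤ ∑ l, (n1*(q 0 1 l * A l) + n1*(q 0 1 l * C l) + n2*(q 1 1 l * A l)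
      + n2*(q 1 1 l * C l) - σp*(q 0 0 l * X l) + σp*(q 1 0 l * X l)
      - (k+p)*(q 0 1 l * A l) + (k+p)*(q 0 1 l * C l)
      + (p-k)*(q 1 1 l * A l) - (p-k)*(q 1 1 l * C l)) :=
    Finset.sum_nonneg fun l _ => hL l
  have hsplit : ∑ l, (n1*(q 0 1 l * A l) + n1*(q 0 1 l * C l) + n2*(q 1 1 l * A l)
      + n2*(q 1 1 l * C l) - σp*(q 0 0 l * X l) + σp*(q 1 0 l * X l)
      - (k+p)*(q 0 1 l * A l) + (k+p)*(q 0 1 l * C l)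
      + (p-k)*(q 1 1 l * A l) - (p-k)*(q 1 1 l * C l))
      = n1*(∑ l, q 0 1 l * A l) + n1*(∑ l, q 0 1 l * C l) + n2*(∑ l, q 1 1 l * A l)
      + n2*(∑ l, q 1 1 l * C l) - σp*(∑ l, q 0 0 l * X l) + σp*(∑ l, q 1 0 l * X l)
      - (k+p)*(∑ l, q 0 1 l * A l) + (k+p)*(∑ l, q 0 1 l * C l)
      + (p-k)*(∑ l, q 1 1 l * A l) - (p-k)*(∑ l, q 1 1 l * C l) := by
    simp only [Finset.mul_sum, ← Finset.sum_add_distrib, ← Finset.sum_sub_distrib]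
  rw [hsplit, S1A, S1C, S2A, S2C, S3, S4] at hS
  -- final contradiction
  have hpk1 : p*k ≤ 1 := by nlinarith only [hk1, hp1, hp0, sq_nonneg (p-k)]
  have hpk2 : -1 ≤ p*k := by nlinarith only [hk1, hp1, hp0, sq_nonneg (p+k)]
  have hs2k : p^2*s^2 + p^2*k^2 = p^2 := by linear_combination (p^2) * hsk
  have hpos : 0 < s^2*(2*p^2 - 1) := mul_pos hs2 (by linarith)
  have hσpsq : σp^2 = p^2*s^2 := by rw [hσp]; ring
  have key1 : (1 + p*k)^2 < n1^2 := by nlinarith only [hn1sq, hs2k, hpos, hσpsq, hsk]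
  have key2 : (1 - p*k)^2 < n2^2 := by nlinarith only [hn2sq, hs2k, hpos, hσpsq, hsk]
  have hn1gt : 1 + p*k < n1 := by nlinarith only [key1, hn1nn, hpk2]
  have hn2gt : 1 - p*k < n2 := by nlinarith only [key2, hn2nn, hpk1]
  have hn1pos : 0 < n1 := by linarith
  have hn2pos : 0 < n2 := by linarith
  have m1 : n1*(1 + p*k) < n1*n1 := mul_lt_mul_of_pos_left hn1gt hn1pos
  have m2 : n2*(1 - p*k) < n2*n2 := mul_lt_mul_of_pos_left hn2gt hn2pos
  have e1 : n1*n1 = σp^2 + (k+p)^2 := by rw [← hn1sq]; ring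
  have e2 : n2*n2 = σp^2 + (k-p)^2 := by rw [← hn2sq]; ring
  nlinarith only [hS, m1, m2, e1, e2]



end
end

section
/- For p ∈ [0,1] and θ ∈ ℝ, let ρ(p,θ) := (1/4)·(I₄ + p·cos(2θ)·(σ3 ⊗ₖ I₂) + cos(2θ)·(I₂ ⊗ₖ σ3) + p·sin(2θ)·(σ1 ⊗ₖ σ1) − p·sin(2θ)·(σ2 ⊗ₖ σ2) + p·(σ3 ⊗ₖ σ3)). Then there exist unit vectors a1, a2, b1, b2 in EuclideanSpace ℝ (Fin 3) whose CHSH value for ρ(p,θ) exceeds 2 if and only if p²·(1 + sin²(2θ)) > 1. -/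
open Matrix Polynomial
open scoped Kronecker Matrix ComplexOrder

noncomputable section

lemma cauchy3' (x0 x1 x2 w0 w1 w2 : ℝ) (h : x0^2+x1^2+x2^2 = 1) :
    x0*w0 + x1*w1 + x2*w2 ≤ Real.sqrt (w0^2+w1^2+w2^2) := by
  have h1 : (x0*w0+x1*w1+x2*w2)^2 ≤ w0^2+w1^2+w2^2 := by
    nlinarith [sq_nonneg (x0*w1 - x1*w0), sq_nonneg (x0*w2-x2*w0), sq_nonneg (x1*w2-x2*w1),
      sq_nonneg (x0*w0+x1*w1+x2*w2)]
  calc x0*w0+x1*w1+x2*w2 ≤ |x0*w0+x1*w1+x2*w2| := le_abs_self _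
    _ = Real.sqrt ((x0*w0+x1*w1+x2*w2)^2) := (Real.sqrt_sq_eq_abs _).symm
    _ ≤ Real.sqrt (w0^2+w1^2+w2^2) := Real.sqrt_le_sqrt h1

lemma sqrt_CS' (x y z w : ℝ) (hx : 0 ≤ x) (hy : 0 ≤ y) (hz : 0 ≤ z) (hw : 0 ≤ w) :
    Real.sqrt x * Real.sqrt y + Real.sqrt z * Real.sqrt w ≤
      Real.sqrt (x+z) * Real.sqrt (y+w) := by
  have key : 2*(Real.sqrt x*Real.sqrt y*(Real.sqrt z*Real.sqrt w)) ≤ x*w + z*y := by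
    nlinarith [sq_nonneg (Real.sqrt x*Real.sqrt w - Real.sqrt z*Real.sqrt y),
      Real.sq_sqrt hx, Real.sq_sqrt hy, Real.sq_sqrt hz, Real.sq_sqrt hw,
      Real.sqrt_nonneg x, Real.sqrt_nonneg y, Real.sqrt_nonneg z, Real.sqrt_nonneg w]
  have hsq : (Real.sqrt x * Real.sqrt y + Real.sqrt z * Real.sqrt w)^2 ≤ (x+z)*(y+w) := by
    nlinarith [Real.sq_sqrt hx, Real.sq_sqrt hy, Real.sq_sqrt hz, Real.sq_sqrt hw]
  have hnn : 0 ≤ Real.sqrt x * Real.sqrt y + Real.sqrt z * Real.sqrt w := by positivity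
  calc Real.sqrt x * Real.sqrt y + Real.sqrt z * Real.sqrt w
      = Real.sqrt ((Real.sqrt x * Real.sqrt y + Real.sqrt z * Real.sqrt w)^2) :=
        (Real.sqrt_sq hnn).symm
    _ ≤ Real.sqrt ((x+z)*(y+w)) := Real.sqrt_le_sqrt hsq
    _ = Real.sqrt (x+z) * Real.sqrt (y+w) := Real.sqrt_mul (by linarith) _

lemma bessel' (u0 u1 u2 v0 v1 v2 : ℝ) (horth : u0*v0+u1*v1+u2*v2 = 0) :
    u2^2*(v0^2+v1^2+v2^2) + v2^2*(u0^2+u1^2+u2^2) ≤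
      (u0^2+u1^2+u2^2)*(v0^2+v1^2+v2^2) := by
  have h2 : u0*v0+u1*v1 = -(u2*v2) := by linarith
  have h3 : (u0*v0+u1*v1)^2 = (u2*v2)^2 := by rw [h2]; ring
  nlinarith [sq_nonneg (u0*v1 - u1*v0), h3]

set_option maxHeartbeats 2000000 in
lemma key_bound' (s t u0 u1 u2 v0 v1 v2 : ℝ) (hst : s^2 ≤ t^2) (h1 : s^2+t^2 ≤ 1)
    (hUV : (u0^2+u1^2+u2^2) + (v0^2+v1^2+v2^2) = 4)
    (horth : u0*v0+u1*v1+u2*v2 = 0) :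
    Real.sqrt (s^2*u0^2+s^2*u1^2+t^2*u2^2) + Real.sqrt (s^2*v0^2+s^2*v1^2+t^2*v2^2) ≤ 2 := by
  have ht2 : t^2 ≤ 1 := by nlinarith [sq_nonneg s]
  by_cases hU : u0^2+u1^2+u2^2 = 0
  · have hu0 : u0 = 0 := by nlinarith [sq_nonneg u0, sq_nonneg u1, sq_nonneg u2]
    have hu1 : u1 = 0 := by nlinarith [sq_nonneg u0, sq_nonneg u1, sq_nonneg u2]
    have hu2 : u2 = 0 := by nlinarith [sq_nonneg u0, sq_nonneg u1, sq_nonneg u2]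
    have hZ : s^2*v0^2+s^2*v1^2+t^2*v2^2 ≤ 4 := by
      nlinarith [sq_nonneg v0, sq_nonneg v1, sq_nonneg v2, mul_le_mul_of_nonneg_right hst (sq_nonneg v0), mul_le_mul_of_nonneg_right hst (sq_nonneg v1), mul_le_mul_of_nonneg_right ht2 (sq_nonneg v0), mul_le_mul_of_nonneg_right ht2 (sq_nonneg v1), mul_le_mul_of_nonneg_right ht2 (sq_nonneg v2)]
    have : Real.sqrt (s^2*v0^2+s^2*v1^2+t^2*v2^2) ≤ 2 := by
      calc Real.sqrt (s^2*v0^2+s^2*v1^2+t^2*v2^2) ≤ Real.sqrt 4 := Real.sqrt_le_sqrt hZ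
        _ = 2 := by rw [show (4:ℝ) = 2^2 by norm_num, Real.sqrt_sq]; norm_num
    simp [hu0, hu1, hu2]
    linarith
  by_cases hV : v0^2+v1^2+v2^2 = 0
  · have hv0 : v0 = 0 := by nlinarith [sq_nonneg v0, sq_nonneg v1, sq_nonneg v2]
    have hv1 : v1 = 0 := by nlinarith [sq_nonneg v0, sq_nonneg v1, sq_nonneg v2]
    have hv2 : v2 = 0 := by nlinarith [sq_nonneg v0, sq_nonneg v1, sq_nonneg v2]
    have hZ : s^2*u0^2+s^2*u1^2+t^2*u2^2 ≤ 4 := by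
      nlinarith [sq_nonneg u0, sq_nonneg u1, sq_nonneg u2, mul_le_mul_of_nonneg_right hst (sq_nonneg u0), mul_le_mul_of_nonneg_right hst (sq_nonneg u1), mul_le_mul_of_nonneg_right ht2 (sq_nonneg u0), mul_le_mul_of_nonneg_right ht2 (sq_nonneg u1), mul_le_mul_of_nonneg_right ht2 (sq_nonneg u2)]
    have : Real.sqrt (s^2*u0^2+s^2*u1^2+t^2*u2^2) ≤ 2 := by
      calc Real.sqrt (s^2*u0^2+s^2*u1^2+t^2*u2^2) ≤ Real.sqrt 4 := Real.sqrt_le_sqrt hZ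
        _ = 2 := by rw [show (4:ℝ) = 2^2 by norm_num, Real.sqrt_sq]; norm_num
    simp [hv0, hv1, hv2]
    linarith
  · have hUpos : 0 < u0^2+u1^2+u2^2 := lt_of_le_of_ne (by positivity) (Ne.symm hU)
    have hVpos : 0 < v0^2+v1^2+v2^2 := lt_of_le_of_ne (by positivity) (Ne.symm hV)
    have e1 : Real.sqrt (s^2*u0^2+s^2*u1^2+t^2*u2^2) =
        Real.sqrt (u0^2+u1^2+u2^2) * Real.sqrt ((s^2*u0^2+s^2*u1^2+t^2*u2^2)/(u0^2+u1^2+u2^2)) := by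
      rw [← Real.sqrt_mul hUpos.le, mul_div_cancel₀ _ (ne_of_gt hUpos)]
    have e2 : Real.sqrt (s^2*v0^2+s^2*v1^2+t^2*v2^2) =
        Real.sqrt (v0^2+v1^2+v2^2) * Real.sqrt ((s^2*v0^2+s^2*v1^2+t^2*v2^2)/(v0^2+v1^2+v2^2)) := by
      rw [← Real.sqrt_mul hVpos.le, mul_div_cancel₀ _ (ne_of_gt hVpos)]
    have hcs := sqrt_CS' (u0^2+u1^2+u2^2) ((s^2*u0^2+s^2*u1^2+t^2*u2^2)/(u0^2+u1^2+u2^2))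
      (v0^2+v1^2+v2^2) ((s^2*v0^2+s^2*v1^2+t^2*v2^2)/(v0^2+v1^2+v2^2))
      hUpos.le (by positivity) hVpos.le (by positivity)
    have hfrac : (s^2*u0^2+s^2*u1^2+t^2*u2^2)/(u0^2+u1^2+u2^2)
        + (s^2*v0^2+s^2*v1^2+t^2*v2^2)/(v0^2+v1^2+v2^2) ≤ s^2 + t^2 := by
      rw [div_add_div _ _ (ne_of_gt hUpos) (ne_of_gt hVpos), div_le_iff₀ (by positivity)]
      have hbes := bessel' u0 u1 u2 v0 v1 v2 horth
      have hb2 := mul_le_mul_of_nonneg_left hbes (sub_nonneg.2 hst)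
      nlinarith [hb2]
    calc Real.sqrt (s^2*u0^2+s^2*u1^2+t^2*u2^2) + Real.sqrt (s^2*v0^2+s^2*v1^2+t^2*v2^2)
        = _ + _ := by rw [e1, e2]
      _ ≤ Real.sqrt ((u0^2+u1^2+u2^2)+(v0^2+v1^2+v2^2)) *
            Real.sqrt ((s^2*u0^2+s^2*u1^2+t^2*u2^2)/(u0^2+u1^2+u2^2)
              + (s^2*v0^2+s^2*v1^2+t^2*v2^2)/(v0^2+v1^2+v2^2)) := hcs
      _ ≤ Real.sqrt 4 * Real.sqrt 1 := by
          gcongr <;> linarith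
      _ = 2 := by rw [Real.sqrt_one, show (4:ℝ) = 2^2 by norm_num, Real.sqrt_sq] <;> norm_num

lemma chsh_scalar (s t a10 a11 a12 a20 a21 a22 b10 b11 b12 b20 b21 b22 : ℝ)
    (hst : s^2 ≤ t^2) (h1 : s^2+t^2 ≤ 1)
    (ha1 : a10^2+a11^2+a12^2 = 1) (ha2 : a20^2+a21^2+a22^2 = 1)
    (hb1 : b10^2+b11^2+b12^2 = 1) (hb2 : b20^2+b21^2+b22^2 = 1) :
    (s*(a10*b10 - a11*b11) + t*(a12*b12)) + (s*(a20*b10 - a21*b11) + t*(a22*b12))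
      + (s*(a10*b20 - a11*b21) + t*(a12*b22)) - (s*(a20*b20 - a21*b21) + t*(a22*b22)) ≤ 2 := by
  have hc1 := cauchy3' a10 a11 a12 (s*(b10+b20)) (-(s*(b11+b21))) (t*(b12+b22)) ha1
  have hc2 := cauchy3' a20 a21 a22 (s*(b10-b20)) (-(s*(b11-b21))) (t*(b12-b22)) ha2
  have e1 : (s*(b10+b20))^2 + (-(s*(b11+b21)))^2 + (t*(b12+b22))^2
      = s^2*(b10+b20)^2+s^2*(b11+b21)^2+t^2*(b12+b22)^2 := by ring
  have e2 : (s*(b10-b20))^2 + (-(s*(b11-b21)))^2 + (t*(b12-b22))^2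
      = s^2*(b10-b20)^2+s^2*(b11-b21)^2+t^2*(b12-b22)^2 := by ring
  rw [e1] at hc1
  rw [e2] at hc2
  have hkey := key_bound' s t (b10+b20) (b11+b21) (b12+b22) (b10-b20) (b11-b21) (b12-b22)
    hst h1 (by linear_combination 2*hb1 + 2*hb2) (by linear_combination hb1 - hb2)
  have lhs_eq : (s*(a10*b10 - a11*b11) + t*(a12*b12)) + (s*(a20*b10 - a21*b11) + t*(a22*b12))
      + (s*(a10*b20 - a11*b21) + t*(a12*b22)) - (s*(a20*b20 - a21*b21) + t*(a22*b22))
      = (a10*(s*(b10+b20)) + a11*(-(s*(b11+b21))) + a12*(t*(b12+b22)))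
        + (a20*(s*(b10-b20)) + a21*(-(s*(b11-b21))) + a22*(t*(b12-b22))) := by ring
  rw [lhs_eq]
  linarith

lemma norm_sq_one' (x : EuclideanSpace ℝ (Fin 3)) (h : ‖x‖ = 1) :
    x 0^2 + x 1^2 + x 2^2 = 1 := by
  have h2 : ‖x‖^2 = 1 := by rw [h]; norm_num
  rw [EuclideanSpace.norm_eq, Real.sq_sqrt (by positivity)] at h2
  simpa [Fin.sum_univ_three, Real.norm_eq_abs, sq_abs] using h2

lemma norm_eq_one' (x : EuclideanSpace ℝ (Fin 3)) (h : x 0^2 + x 1^2 + x 2^2 = 1) :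
    ‖x‖ = 1 := by
  rw [EuclideanSpace.norm_eq]
  simp only [Fin.sum_univ_three, Real.norm_eq_abs, sq_abs]
  rw [h, Real.sqrt_one]

lemma corrE_formula (p θ : ℝ)
    (ρ : Matrix (Fin 2 × Fin 2) (Fin 2 × Fin 2) ℂ)
    (hρ : ρ = (1/4 : ℝ) • ((1 : Matrix (Fin 2 × Fin 2) (Fin 2 × Fin 2) ℂ)
      + (p * Real.cos (2*θ)) • (σ₃ ⊗ₖ (1 : Matrix (Fin 2) (Fin 2) ℂ))
      + Real.cos (2*θ) • ((1 : Matrix (Fin 2) (Fin 2) ℂ) ⊗ₖ σ₃)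
      + (p * Real.sin (2*θ)) • (σ₁ ⊗ₖ σ₁)
      - (p * Real.sin (2*θ)) • (σ₂ ⊗ₖ σ₂)
      + p • (σ₃ ⊗ₖ σ₃)))
    (a b : EuclideanSpace ℝ (Fin 3)) :
    corrE ρ a b = p * Real.sin (2*θ) * (a 0 * b 0 - a 1 * b 1) + p * (a 2 * b 2) := by
  simp only [corrE, hρ, Matrix.trace, Matrix.diag, Matrix.mul_apply, Fintype.sum_prod_type,
    Fin.sum_univ_two, Matrix.kroneckerMap_apply, pauliVec, σ₁, σ₂, σ₃,
    Matrix.smul_apply, Matrix.add_apply, Matrix.sub_apply, Matrix.one_apply,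
    Matrix.cons_val', Matrix.cons_val_zero, Matrix.cons_val_one, Matrix.head_cons,
    Matrix.empty_val', Matrix.cons_val_fin_one, Matrix.head_fin_const, smul_eq_mul,
    Prod.mk.injEq]
  norm_num [Complex.ext_iff, Complex.add_re, Complex.mul_re, Complex.mul_im,
    Complex.sin_ofReal_re, Complex.cos_ofReal_re]
  rw [show ((2:ℂ)*θ) = ((2*θ:ℝ):ℂ) by push_cast; ring]
  simp only [Complex.sin_ofReal_re, Complex.sin_ofReal_im, Complex.cos_ofReal_re,
    Complex.cos_ofReal_im]
  ring

/-- the state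
`ρ(p,θ) = (1/4)(I₄ + p cos 2θ σ3⊗I₂ + cos 2θ I₂⊗σ3 + p sin 2θ σ1⊗σ1 − p sin 2θ σ2⊗σ2 + p σ3⊗σ3)`
has a CHSH value exceeding 2 for some unit measurement vectors iff `p²(1+sin² 2θ) > 1`. -/
theorem one_way_chsh_iff (p θ : ℝ) (hp0 : 0 ≤ p) (hp1 : p ≤ 1)
    (ρ : Matrix (Fin 2 × Fin 2) (Fin 2 × Fin 2) ℂ)
    (hρ : ρ = (1/4 : ℝ) • ((1 : Matrix (Fin 2 × Fin 2) (Fin 2 × Fin 2) ℂ)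
      + (p * Real.cos (2*θ)) • (σ₃ ⊗ₖ (1 : Matrix (Fin 2) (Fin 2) ℂ))
      + Real.cos (2*θ) • ((1 : Matrix (Fin 2) (Fin 2) ℂ) ⊗ₖ σ₃)
      + (p * Real.sin (2*θ)) • (σ₁ ⊗ₖ σ₁)
      - (p * Real.sin (2*θ)) • (σ₂ ⊗ₖ σ₂)
      + p • (σ₃ ⊗ₖ σ₃))) :
    (∃ a1 a2 b1 b2 : EuclideanSpace ℝ (Fin 3),
      ‖a1‖ = 1 ∧ ‖a2‖ = 1 ∧ ‖b1‖ = 1 ∧ ‖b2‖ = 1 ∧ 2 < CHSHval ρ a1 a2 b1 b2) ↔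
    1 < p ^ 2 * (1 + Real.sin (2*θ) ^ 2) := by
  constructor
  · rintro ⟨a1, a2, b1, b2, h1, h2, h3, h4, hch⟩
    by_contra hnot
    push_neg at hnot
    have hst : (p * Real.sin (2*θ))^2 ≤ p^2 := by
      nlinarith [Real.sin_sq_le_one (2*θ), sq_nonneg p, Real.neg_one_le_sin (2*θ), Real.sin_le_one (2*θ)]
    have hsum : (p * Real.sin (2*θ))^2 + p^2 ≤ 1 := by nlinarith
    have hb := chsh_scalar (p * Real.sin (2*θ)) p (a1 0) (a1 1) (a1 2) (a2 0) (a2 1) (a2 2)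
      (b1 0) (b1 1) (b1 2) (b2 0) (b2 1) (b2 2)
      (by nlinarith) hsum (norm_sq_one' a1 h1) (norm_sq_one' a2 h2)
      (norm_sq_one' b1 h3) (norm_sq_one' b2 h4)
    rw [CHSHval, corrE_formula p θ ρ hρ, corrE_formula p θ ρ hρ, corrE_formula p θ ρ hρ,
      corrE_formula p θ ρ hρ] at hch
    nlinarith [hb, hch]
  · intro h
    set s := p * Real.sin (2*θ) with hs
    set t := p with ht
    have hsum : 1 < s^2 + t^2 := by rw [hs, ht]; nlinarith
    set c := Real.sqrt (s^2 + t^2) with hc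
    have hc2 : c^2 = s^2 + t^2 := Real.sq_sqrt (by positivity)
    have hc1 : 1 < c := by
      rw [hc, show (1:ℝ) = Real.sqrt 1 by rw [Real.sqrt_one]]
      exact Real.sqrt_lt_sqrt (by norm_num) hsum
    have hcpos : 0 < c := by linarith
    refine ⟨(WithLp.equiv 2 _).symm ![1, 0, 0], (WithLp.equiv 2 _).symm ![0, 0, 1],
      (WithLp.equiv 2 _).symm ![s/c, 0, t/c], (WithLp.equiv 2 _).symm ![s/c, 0, -(t/c)],
      ?_, ?_, ?_, ?_, ?_⟩
    · apply norm_eq_one'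
      simp [WithLp.equiv_symm_apply, PiLp.toLp_apply]
    · apply norm_eq_one'
      simp [WithLp.equiv_symm_apply, PiLp.toLp_apply]
    · apply norm_eq_one'
      simp only [WithLp.equiv_symm_apply, PiLp.toLp_apply, Matrix.cons_val_zero, Matrix.cons_val_one,
        Matrix.head_cons, Matrix.cons_val_two, Matrix.tail_cons]
      field_simp
      linarith [hc2]
    · apply norm_eq_one'
      simp only [WithLp.equiv_symm_apply, PiLp.toLp_apply, Matrix.cons_val_zero, Matrix.cons_val_one,
        Matrix.head_cons, Matrix.cons_val_two, Matrix.tail_cons]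
      field_simp
      linarith [hc2]
    · rw [CHSHval, corrE_formula p θ ρ hρ, corrE_formula p θ ρ hρ, corrE_formula p θ ρ hρ,
        corrE_formula p θ ρ hρ]
      simp only [WithLp.equiv_symm_apply, PiLp.toLp_apply, Matrix.cons_val_zero, Matrix.cons_val_one,
        Matrix.head_cons, Matrix.cons_val_two, Matrix.tail_cons]
      rw [← hs, ← ht]
      have hval : s * (1 * (s/c) - 0 * 0) + t * (0 * (t/c)) + (s * (0 * (s/c) - 0 * 0) + t * (1 * (t/c)))
          + (s * (1 * (s/c) - 0 * 0) + t * (0 * (-(t/c)))) - (s * (0 * (s/c) - 0 * 0) + t * (1 * (-(t/c))))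
          = 2 * (s^2 + t^2) / c := by field_simp; ring
      rw [hval, ← hc2]
      rw [show 2 * c^2 / c = 2 * c by field_simp]
      linarith

end
end

section
/- For p ∈ [0,1] and θ ∈ ℝ, let ϱ := (1/4)·(I₄ + p·cos(2θ)·(σ3 ⊗ₖ I₂) + cos²θ·(I₂ ⊗ₖ σ3) + p·sin θ·cos θ·(σ1 ⊗ₖ σ1) − p·sin θ·cos θ·(σ2 ⊗ₖ σ2) + p·cos²θ·(σ3 ⊗ₖ σ3)). Then for every quadruple of unit vectors a1, a2, b1, b2 in EuclideanSpace ℝ (Fin 3), the CHSH value of ϱ at (a1,a2,b1,b2) is at most 2; that is, ϱ can never generate a CHSH violation with projective measurements. -/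
open Matrix Polynomial
open scoped Kronecker Matrix ComplexOrder

noncomputable section

private lemma normsq3 (x : EuclideanSpace ℝ (Fin 3)) (h : ‖x‖ = 1) :
    x 0 ^ 2 + x 1 ^ 2 + x 2 ^ 2 = 1 := by
  rw [EuclideanSpace.norm_eq] at h
  have h2 := Real.sqrt_eq_one.mp h
  simpa [Fin.sum_univ_three, Real.norm_eq_abs, sq_abs] using h2

private lemma cs3 (a0 a1 a2 w0 w1 w2 : ℝ) (h : a0^2 + a1^2 + a2^2 = 1) :
    a0*w0 + a1*w1 + a2*w2 ≤ Real.sqrt (w0^2 + w1^2 + w2^2) := by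
  have h2 : (a0*w0 + a1*w1 + a2*w2)^2 ≤ w0^2 + w1^2 + w2^2 := by
    nlinarith [sq_nonneg (a0*w1 - a1*w0), sq_nonneg (a0*w2 - a2*w0), sq_nonneg (a1*w2 - a2*w1)]
  calc a0*w0 + a1*w1 + a2*w2 ≤ |a0*w0 + a1*w1 + a2*w2| := le_abs_self _
    _ = Real.sqrt ((a0*w0 + a1*w1 + a2*w2)^2) := (Real.sqrt_sq_eq_abs _).symm
    _ ≤ _ := Real.sqrt_le_sqrt h2

set_option maxHeartbeats 1000000 in
private lemma key_sqrt (P Q R S : ℝ) (hP : 0 ≤ P) (hQ : 0 ≤ Q) (hR : 0 ≤ R) (hS : 0 ≤ S)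
    (hPR : P ≤ R) (hQS : Q ≤ S) (hmix : P*S + Q*R ≤ R*S) (hsum : R + S ≤ 4) :
    Real.sqrt P + Real.sqrt Q ≤ 2 := by
  have hx := Real.sqrt_nonneg P
  have hy := Real.sqrt_nonneg Q
  have hx2 : Real.sqrt P ^ 2 = P := Real.sq_sqrt hP
  have hy2 : Real.sqrt Q ^ 2 = Q := Real.sq_sqrt hQ
  rcases eq_or_lt_of_le hR with hR0 | hR0
  · have hP0 : P = 0 := le_antisymm (by linarith) hP
    have hxz : Real.sqrt P = 0 := by rw [hP0, Real.sqrt_zero]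
    have hQ4 : Q ≤ 4 := by linarith
    nlinarith [hy2, hy]
  rcases eq_or_lt_of_le hS with hS0 | hS0
  · have hQ0 : Q = 0 := le_antisymm (by linarith) hQ
    have hyz : Real.sqrt Q = 0 := by rw [hQ0, Real.sqrt_zero]
    have hP4 : P ≤ 4 := by linarith
    nlinarith [hx2, hx]
  · have hRS : 0 < R*S := mul_pos hR0 hS0
    have hmix' : Real.sqrt P ^ 2 * S + Real.sqrt Q ^ 2 * R ≤ R*S := by
      rw [hx2, hy2]; exact hmix
    have c1 : (Real.sqrt P + Real.sqrt Q)^2 * (R*S)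
        ≤ (Real.sqrt P ^ 2 * S + Real.sqrt Q ^ 2 * R)*(R+S) := by
      nlinarith [sq_nonneg (Real.sqrt P * S - Real.sqrt Q * R)]
    have c2 : (Real.sqrt P ^ 2 * S + Real.sqrt Q ^ 2 * R)*(R+S) ≤ 4*(R*S) := by
      nlinarith [mul_nonneg (sub_nonneg.2 hmix') (by linarith : (0:ℝ) ≤ R + S),
        mul_nonneg hRS.le (by linarith : (0:ℝ) ≤ 4 - (R+S))]
    have c3 : (Real.sqrt P + Real.sqrt Q)^2 ≤ 4 :=
      le_of_mul_le_mul_right (by linarith) hRS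
    nlinarith [c3, sq_nonneg (Real.sqrt P + Real.sqrt Q - 2), mul_nonneg hx hy]

private lemma bessel3 (α β u0 u1 u2 v0 v1 v2 : ℝ) (h2a : 2*α^2 ≤ 1) (hab : α^2 + β^2 ≤ 1)
    (hortho : u0*v0 + u1*v1 + u2*v2 = 0) :
    ((α*u0)^2 + (α*u1)^2 + (β*u2)^2)*(v0^2+v1^2+v2^2)
      + ((α*v0)^2 + (α*v1)^2 + (β*v2)^2)*(u0^2+u1^2+u2^2)
      ≤ (u0^2+u1^2+u2^2)*(v0^2+v1^2+v2^2) := by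
  have hId : (u0^2+u1^2+u2^2)*(v0^2+v1^2+v2^2)
      = u2^2*(v0^2+v1^2+v2^2) + v2^2*(u0^2+u1^2+u2^2) + (u0*v1 - u1*v0)^2 := by
    linear_combination ((u0*v0 + u1*v1 + u2*v2) - 2*(u2*v2)) * hortho
  have hD : u2^2*(v0^2+v1^2+v2^2) + v2^2*(u0^2+u1^2+u2^2)
      ≤ (u0^2+u1^2+u2^2)*(v0^2+v1^2+v2^2) := by
    nlinarith [sq_nonneg (u0*v1 - u1*v0)]
  have hDnn : 0 ≤ u2^2*(v0^2+v1^2+v2^2) + v2^2*(u0^2+u1^2+u2^2) := by positivity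
  nlinarith [mul_nonneg (by linarith : (0:ℝ) ≤ 1 - 2*α^2)
      (by linarith : 0 ≤ (u0^2+u1^2+u2^2)*(v0^2+v1^2+v2^2)
        - (u2^2*(v0^2+v1^2+v2^2) + v2^2*(u0^2+u1^2+u2^2))),
    mul_nonneg (by linarith : (0:ℝ) ≤ 1 - (α^2+β^2)) hDnn]

set_option maxHeartbeats 2000000 in
private lemma chsh_master (α β a10 a11 a12 a20 a21 a22 b10 b11 b12 b20 b21 b22 : ℝ)
    (h2a : 2*α^2 ≤ 1) (hab : α^2 + β^2 ≤ 1)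
    (na1 : a10^2 + a11^2 + a12^2 = 1) (na2 : a20^2 + a21^2 + a22^2 = 1)
    (nb1 : b10^2 + b11^2 + b12^2 = 1) (nb2 : b20^2 + b21^2 + b22^2 = 1) :
    (α*(a10*b10) - α*(a11*b11) + β*(a12*b12))
    + (α*(a20*b10) - α*(a21*b11) + β*(a22*b12))
    + (α*(a10*b20) - α*(a11*b21) + β*(a12*b22))
    - (α*(a20*b20) - α*(a21*b21) + β*(a22*b22)) ≤ 2 := by
  have hα1 : α^2 ≤ 1 := by linarith [sq_nonneg α]
  have hβ1 : β^2 ≤ 1 := by nlinarith [sq_nonneg α]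
  have c1 := cs3 a10 a11 a12 (α*(b10+b20)) (-(α*(b11+b21))) (β*(b12+b22)) na1
  have c2 := cs3 a20 a21 a22 (α*(b10-b20)) (-(α*(b11-b21))) (β*(b12-b22)) na2
  simp only [neg_sq] at c1 c2
  have hortho : (b10+b20)*(b10-b20) + (b11+b21)*(b11-b21) + (b12+b22)*(b12-b22) = 0 := by
    linear_combination nb1 - nb2
  have hbes := bessel3 α β (b10+b20) (b11+b21) (b12+b22) (b10-b20) (b11-b21) (b12-b22)
    h2a hab hortho
  have hPR : (α*(b10+b20))^2 + (α*(b11+b21))^2 + (β*(b12+b22))^2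
      ≤ (b10+b20)^2 + (b11+b21)^2 + (b12+b22)^2 := by
    nlinarith [mul_nonneg (by linarith : (0:ℝ) ≤ 1 - α^2) (sq_nonneg (b10+b20)),
      mul_nonneg (by linarith : (0:ℝ) ≤ 1 - α^2) (sq_nonneg (b11+b21)),
      mul_nonneg (by linarith : (0:ℝ) ≤ 1 - β^2) (sq_nonneg (b12+b22))]
  have hQS : (α*(b10-b20))^2 + (α*(b11-b21))^2 + (β*(b12-b22))^2
      ≤ (b10-b20)^2 + (b11-b21)^2 + (b12-b22)^2 := by
    nlinarith [mul_nonneg (by linarith : (0:ℝ) ≤ 1 - α^2) (sq_nonneg (b10-b20)),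
      mul_nonneg (by linarith : (0:ℝ) ≤ 1 - α^2) (sq_nonneg (b11-b21)),
      mul_nonneg (by linarith : (0:ℝ) ≤ 1 - β^2) (sq_nonneg (b12-b22))]
  have hsum : ((b10+b20)^2 + (b11+b21)^2 + (b12+b22)^2)
      + ((b10-b20)^2 + (b11-b21)^2 + (b12-b22)^2) ≤ 4 := by nlinarith [nb1, nb2]
  have hkey := key_sqrt ((α*(b10+b20))^2 + (α*(b11+b21))^2 + (β*(b12+b22))^2)
    ((α*(b10-b20))^2 + (α*(b11-b21))^2 + (β*(b12-b22))^2)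
    ((b10+b20)^2 + (b11+b21)^2 + (b12+b22)^2)
    ((b10-b20)^2 + (b11-b21)^2 + (b12-b22)^2)
    (by positivity) (by positivity) (by positivity) (by positivity)
    hPR hQS hbes hsum
  linarith [c1, c2, hkey]

private lemma corr_eval (p θ : ℝ)
    (ϱ : Matrix (Fin 2 × Fin 2) (Fin 2 × Fin 2) ℂ)
    (hϱ : ϱ = (1/4 : ℝ) • ((1 : Matrix (Fin 2 × Fin 2) (Fin 2 × Fin 2) ℂ)
      + (p * Real.cos (2*θ)) • (σ₃ ⊗ₖ (1 : Matrix (Fin 2) (Fin 2) ℂ))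
      + (Real.cos θ ^ 2) • ((1 : Matrix (Fin 2) (Fin 2) ℂ) ⊗ₖ σ₃)
      + (p * Real.sin θ * Real.cos θ) • (σ₁ ⊗ₖ σ₁)
      - (p * Real.sin θ * Real.cos θ) • (σ₂ ⊗ₖ σ₂)
      + (p * Real.cos θ ^ 2) • (σ₃ ⊗ₖ σ₃)))
    (a b : EuclideanSpace ℝ (Fin 3)) :
    corrE ϱ a b = p * Real.sin θ * Real.cos θ * (a 0 * b 0)
      - p * Real.sin θ * Real.cos θ * (a 1 * b 1)
      + p * Real.cos θ ^ 2 * (a 2 * b 2) := by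
  subst hϱ
  simp only [corrE, pauliVec, σ₁, σ₂, σ₃, Matrix.trace, Matrix.diag, Matrix.mul_apply,
    Fintype.sum_prod_type, Fin.sum_univ_succ, Fin.sum_univ_zero, Matrix.kroneckerMap_apply,
    Matrix.smul_apply, Matrix.add_apply, Matrix.sub_apply, Matrix.one_apply,
    Matrix.cons_val', Matrix.cons_val_zero, Matrix.cons_val_one, Matrix.head_cons,
    Matrix.head_fin_const, Matrix.empty_val', Matrix.cons_val_fin_one]
  norm_num [Complex.add_re, Complex.mul_re, Complex.ofReal_re, Complex.ofReal_im,
    Complex.cos_ofReal_re, Complex.sin_ofReal_re, Prod.mk_zero_zero, Prod.mk.injEq,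
    Fin.one_eq_zero_iff, Fin.zero_eq_one_iff]
  simp only [show ((0:Fin 2 × Fin 2) = (0,1)) ↔ False from by decide,
    show ((0:Fin 2 × Fin 2) = (1,0)) ↔ False from by decide,
    show ((1:Fin 2 × Fin 2) = (0,1)) ↔ False from by decide,
    show ((1:Fin 2 × Fin 2) = (1,0)) ↔ False from by decide,
    if_false, Complex.zero_re, neg_zero, add_zero, sub_zero]
  norm_num [sq, Complex.mul_re, Complex.cos_ofReal_re, Complex.cos_ofReal_im,
    show ((0:Fin 2 × Fin 2) = (1,1)) ↔ False from by decide]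
  ring

/-- the state
`ϱ = (1/4)(I₄ + p cos 2θ σ3⊗I₂ + cos²θ I₂⊗σ3 + p sinθ cosθ σ1⊗σ1 − p sinθ cosθ σ2⊗σ2 + p cos²θ σ3⊗σ3)`
never violates the CHSH inequality with projective measurements. -/
theorem povm_state_no_chsh (p θ : ℝ) (hp0 : 0 ≤ p) (hp1 : p ≤ 1)
    (ϱ : Matrix (Fin 2 × Fin 2) (Fin 2 × Fin 2) ℂ)
    (hϱ : ϱ = (1/4 : ℝ) • ((1 : Matrix (Fin 2 × Fin 2) (Fin 2 × Fin 2) ℂ)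
      + (p * Real.cos (2*θ)) • (σ₃ ⊗ₖ (1 : Matrix (Fin 2) (Fin 2) ℂ))
      + (Real.cos θ ^ 2) • ((1 : Matrix (Fin 2) (Fin 2) ℂ) ⊗ₖ σ₃)
      + (p * Real.sin θ * Real.cos θ) • (σ₁ ⊗ₖ σ₁)
      - (p * Real.sin θ * Real.cos θ) • (σ₂ ⊗ₖ σ₂)
      + (p * Real.cos θ ^ 2) • (σ₃ ⊗ₖ σ₃))) :
    ∀ a1 a2 b1 b2 : EuclideanSpace ℝ (Fin 3),
      ‖a1‖ = 1 → ‖a2‖ = 1 → ‖b1‖ = 1 → ‖b2‖ = 1 →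
      CHSHval ϱ a1 a2 b1 b2 ≤ 2 := by
  intro a1 a2 b1 b2 ha1 ha2 hb1 hb2
  have hsc := Real.sin_sq_add_cos_sq θ
  have hp2 : p^2 ≤ 1 := by nlinarith
  have h2a : 2*(p*Real.sin θ*Real.cos θ)^2 ≤ 1 := by
    nlinarith [sq_nonneg (Real.sin θ^2 - Real.cos θ^2),
      mul_nonneg (by linarith : (0:ℝ) ≤ 1 - p^2) (sq_nonneg (Real.sin θ*Real.cos θ)),
      sq_nonneg (Real.sin θ*Real.cos θ)]
  have hab : (p*Real.sin θ*Real.cos θ)^2 + (p*Real.cos θ^2)^2 ≤ 1 := by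
    have hrw : (p*Real.sin θ*Real.cos θ)^2 + (p*Real.cos θ^2)^2
        = (p*Real.cos θ)^2 * (Real.sin θ^2 + Real.cos θ^2) := by ring
    rw [hrw, hsc, mul_one]
    nlinarith [mul_nonneg (sq_nonneg p) (sq_nonneg (Real.sin θ)), sq_nonneg (Real.cos θ)]
  have na1 := normsq3 a1 ha1
  have na2 := normsq3 a2 ha2
  have nb1 := normsq3 b1 hb1
  have nb2 := normsq3 b2 hb2
  have hc := corr_eval p θ ϱ hϱ
  have H := chsh_master (p*Real.sin θ*Real.cos θ) (p*Real.cos θ^2)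
    (a1 0) (a1 1) (a1 2) (a2 0) (a2 1) (a2 2)
    (b1 0) (b1 1) (b1 2) (b2 0) (b2 1) (b2 2)
    h2a hab na1 na2 nb1 nb2
  show corrE ϱ a1 b1 + corrE ϱ a2 b1 + corrE ϱ a1 b2 - corrE ϱ a2 b2 ≤ 2
  rw [hc a1 b1, hc a2 b1, hc a1 b2, hc a2 b2]
  linarith [H]


end
end
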